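/- arXiv:0808.2116 — 7 statements merged into one kernel-verified Lean document; each statement's English description precedes it below -/
import Mathlib

section
/- For k ≥ 1 let v_k(t) := (k^{k−1}/k!) · t^{k−1} · e^{−kt} for t ≥ 0 (the Borel distribution). Then v_k(0) = 1 if k = 1 and v_k(0) = 0 for k ≥ 2, and for every k ≥ 1 and every t ≥ 0 the derivative satisfies v_k'(t) = (k/2)·Σ_{l=1}^{k−1} v_l(t) v_{k−l}(t) − k·v_k(t). -/
open Finset

/-- The Borel distribution: `v_k(t) = k^(k-1)/k! · t^(k-1) · e^(-kt)`. -/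
noncomputable def borelDist (k : ℕ) (t : ℝ) : ℝ :=
  (k : ℝ) ^ (k - 1) / (Nat.factorial k : ℝ) * t ^ (k - 1) * Real.exp (-(k : ℝ) * t)

open fwdDiff in

lemma fd_fun : ∀ n : ℕ, ∀ j < n, (fwdDiff (1:ℝ))^[n] (fun y : ℝ => y ^ j) = 0 := by
  intro n
  induction n with
  | zero => intro j hj; omega
  | succ n ih =>
    intro j hj
    rw [Function.iterate_succ_apply]
    have hΔ : Δ_[(1:ℝ)] (fun y : ℝ => y ^ j)
        = ∑ m ∈ range j, (j.choose m : ℝ) • (fun y : ℝ => y ^ m) := by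
      funext y
      simp only [fwdDiff, Finset.sum_apply, Pi.smul_apply, smul_eq_mul]
      rw [add_pow]
      rw [Finset.sum_range_succ]
      simp only [one_pow, Nat.choose_self, Nat.cast_one, mul_one, Nat.sub_self, pow_zero]
      rw [add_sub_cancel_right]
      exact Finset.sum_congr rfl fun m _ => by ring
    rw [hΔ, fwdDiff_iter_finset_sum]
    funext y
    simp only [Finset.sum_apply, Pi.zero_apply]
    apply Finset.sum_eq_zero
    intro m hm
    rw [fwdDiff_iter_const_smul, ih m (by simp at hm; omega)]
    simp

lemma fd (n j : ℕ) (hj : j < n) (x : ℝ) :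
    ∑ l ∈ range (n+1), (-1:ℝ)^(n-l) * (n.choose l) * (x + l)^j = 0 := by
  have h := fwdDiff_iter_eq_sum_shift (1:ℝ) (fun y : ℝ => y ^ j) n x
  rw [fd_fun n j hj] at h
  simp only [Pi.zero_apply, smul_eq_mul, nsmul_eq_mul, mul_one, zsmul_eq_mul] at h
  rw [show ∑ l ∈ range (n+1), (-1:ℝ)^(n-l) * (n.choose l) * (x + l)^j
      = ∑ l ∈ range (n+1), (((-1:ℤ)^(n-l) * (n.choose l) : ℤ) : ℝ) * (x + l)^j from
    Finset.sum_congr rfl fun l hl => by push_cast; ring]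
  exact h.symm

lemma abel_id : ∀ n : ℕ, ∀ x y : ℝ,
    (y + (n:ℝ))^n + ∑ l ∈ Icc 1 n, (n.choose l : ℝ) * x * (x + (l:ℝ))^(l-1) * (y + ((n-l : ℕ):ℝ))^(n-l)
      = (x + y + (n:ℝ))^n := by
  intro n
  induction n with
  | zero => intro x y; simp
  | succ n ih =>
    intro x
    have hnat : ∀ l ∈ Icc 1 n, (n+1-l) * ((n+1).choose l) = (n+1) * n.choose l := by
      intro l hl
      simp only [Finset.mem_Icc] at hl
      have e0 : (n+1).choose l = (n+1).choose (n-l+1) := by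
        rw [show n - l + 1 = n + 1 - l by omega, Nat.choose_symm (by omega)]
      have e1 := Nat.add_one_mul_choose_eq n (n-l)
      have e2 : n.choose (n-l) = n.choose l := Nat.choose_symm (by omega : l ≤ n)
      rw [e0, show n+1-l = n-l+1 by omega]
      rw [e2] at e1
      rw [mul_comm]
      exact e1.symm
    set f : ℝ → ℝ := fun y => (y + ((n+1:ℕ):ℝ))^(n+1) +
      ∑ l ∈ Icc 1 (n+1), ((n+1).choose l : ℝ) * x * (x + (l:ℝ))^(l-1) * (y + (((n+1)-l : ℕ):ℝ))^((n+1)-l)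
      with hf
    have hder : ∀ y : ℝ, HasDerivAt f (((n+1:ℕ):ℝ) * (x + y + ((n+1:ℕ):ℝ))^n) y := by
      intro y
      have h1 : HasDerivAt (fun y : ℝ => (y + ((n+1:ℕ):ℝ))^(n+1))
          ((((n+1:ℕ)):ℝ) * (y + ((n+1:ℕ):ℝ))^((n+1)-1) * 1) y :=
        ((hasDerivAt_id y).add_const _).pow _
      have h2 : HasDerivAt (fun y : ℝ => ∑ l ∈ Icc 1 (n+1),
            ((n+1).choose l : ℝ) * x * (x + (l:ℝ))^(l-1) * (y + (((n+1)-l : ℕ):ℝ))^((n+1)-l))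
          (∑ l ∈ Icc 1 (n+1), ((n+1).choose l : ℝ) * x * (x + (l:ℝ))^(l-1) *
            (((((n+1)-l : ℕ)):ℝ) * (y + (((n+1)-l : ℕ):ℝ))^(((n+1)-l)-1) * 1)) y := by
        apply HasDerivAt.fun_sum
        intro l _
        exact (((hasDerivAt_id y).add_const _).pow _).const_mul _
      have h3 := h1.add h2
      have heq : (((n+1:ℕ)):ℝ) * (y + ((n+1:ℕ):ℝ))^((n+1)-1) * 1
          + (∑ l ∈ Icc 1 (n+1), ((n+1).choose l : ℝ) * x * (x + (l:ℝ))^(l-1) *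
            (((((n+1)-l : ℕ)):ℝ) * (y + (((n+1)-l : ℕ):ℝ))^(((n+1)-l)-1) * 1))
          = ((n+1:ℕ):ℝ) * (x + y + ((n+1:ℕ):ℝ))^n := by
        rw [Finset.sum_Icc_succ_top (by omega : 1 ≤ n+1)]
        simp only [Nat.sub_self, Nat.cast_zero, pow_zero, zero_mul, mul_zero, add_zero,
          Nat.add_sub_cancel, zero_mul, mul_one]
        have hsum : ∑ l ∈ Icc 1 n, ((n+1).choose l : ℝ) * x * (x + (l:ℝ))^(l-1) *
              ((((n+1)-l : ℕ):ℝ) * (y + (((n+1)-l : ℕ):ℝ))^(((n+1)-l)-1))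
            = ((n+1:ℕ):ℝ) * ∑ l ∈ Icc 1 n, (n.choose l : ℝ) * x * (x + (l:ℝ))^(l-1) *
              ((y+1) + ((n-l : ℕ):ℝ))^(n-l) := by
          rw [Finset.mul_sum]
          apply Finset.sum_congr rfl
          intro l hl
          have hl' : l ≤ n := by simp only [Finset.mem_Icc] at hl; omega
          have c1 : ((n+1)-l : ℕ) = (n-l)+1 := by omega
          have c2 : (((n+1)-l : ℕ):ℝ) = ((n-l:ℕ):ℝ) + 1 := by rw [c1]; push_cast; ring
          have c3 : (((n+1)-l)-1 : ℕ) = n - l := by omega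
          have c4 : ((((n+1)-l) * ((n+1).choose l) : ℕ) : ℝ) = (((n+1) * n.choose l : ℕ) : ℝ) := by
            rw [hnat l hl]
          push_cast at c4
          rw [c2, c3]
          have : (y + (((n-l:ℕ):ℝ) + 1)) = (y + 1 + ((n-l:ℕ):ℝ)) := by ring
          rw [this]
          rw [c2] at c4
          push_cast
          linear_combination (x * (x + (l:ℝ))^(l-1) * (y + 1 + ((n-l:ℕ):ℝ))^(n-l)) * c4
        rw [hsum]
        have key := ih x (y+1)
        have : ((n+1:ℕ):ℝ) * ((y + 1 + (n:ℝ))^n + ∑ l ∈ Icc 1 n, (n.choose l : ℝ) * x * (x + (l:ℝ))^(l-1) *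
              ((y+1) + ((n-l : ℕ):ℝ))^(n-l)) = ((n+1:ℕ):ℝ) * (x + (y+1) + (n:ℝ))^n := by rw [key]
        push_cast at this ⊢
        linear_combination this
      rw [heq] at h3
      exact h3
    have hgder : ∀ y : ℝ, HasDerivAt (fun y => f y - (x + y + ((n+1:ℕ):ℝ))^(n+1)) 0 y := by
      intro y
      have h4 : HasDerivAt (fun y : ℝ => (x + y + ((n+1:ℕ):ℝ))^(n+1))
          ((((n+1:ℕ)):ℝ) * (x + y + ((n+1:ℕ):ℝ))^((n+1)-1) * 1) y := by
        have : HasDerivAt (fun y : ℝ => x + y + ((n+1:ℕ):ℝ)) 1 y := by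
          simpa using ((hasDerivAt_id y).const_add x).add_const ((n+1:ℕ):ℝ)
        exact this.pow _
      have := (hder y).fun_sub h4
      simpa using this
    have hconst := is_const_of_deriv_eq_zero (f := fun y => f y - (x + y + ((n+1:ℕ):ℝ))^(n+1))
      (fun y => (hgder y).differentiableAt) (fun y => (hgder y).deriv)
    intro y
    have h0 : f (-x - ((n+1:ℕ):ℝ)) - (x + (-x - ((n+1:ℕ):ℝ)) + ((n+1:ℕ):ℝ))^(n+1) = 0 := by
      have hrhs : (x + (-x - ((n+1:ℕ):ℝ)) + ((n+1:ℕ):ℝ))^(n+1) = 0 := by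
        rw [show x + (-x - ((n+1:ℕ):ℝ)) + ((n+1:ℕ):ℝ) = 0 by ring]
        simp
      rw [hrhs, sub_zero, hf]
      beta_reduce
      have hterm : ∀ l ∈ Icc 1 (n+1),
          ((n+1).choose l : ℝ) * x * (x + (l:ℝ))^(l-1) * ((-x - ((n+1:ℕ):ℝ)) + (((n+1)-l : ℕ):ℝ))^((n+1)-l)
          = x * ((-1:ℝ)^((n+1)-l) * ((n+1).choose l : ℝ) * (x + (l:ℝ))^n) := by
        intro l hl
        simp only [Finset.mem_Icc] at hl
        have c2 : (((n+1)-l : ℕ):ℝ) = ((n+1:ℕ):ℝ) - (l:ℝ) := by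
          rw [Nat.cast_sub (by omega)]
        have : (-x - ((n+1:ℕ):ℝ)) + (((n+1)-l : ℕ):ℝ) = -(x + (l:ℝ)) := by rw [c2]; ring
        rw [this, neg_pow]
        have hsplit : (x + (l:ℝ))^(l-1) * (x + (l:ℝ))^((n+1)-l) = (x + (l:ℝ))^n := by
          rw [← pow_add]
          congr 1
          omega
        calc ((n+1).choose l : ℝ) * x * (x + (l:ℝ))^(l-1) * ((-1:ℝ)^((n+1)-l) * (x + (l:ℝ))^((n+1)-l))
            = x * ((-1:ℝ)^((n+1)-l) * ((n+1).choose l : ℝ) * ((x + (l:ℝ))^(l-1) * (x + (l:ℝ))^((n+1)-l))) := by ring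
          _ = _ := by rw [hsplit]
      rw [Finset.sum_congr rfl hterm, ← Finset.mul_sum]
      have hfd := fd (n+1) n (by omega) x
      rw [Finset.sum_range_succ'] at hfd
      beta_reduce at hfd
      simp only [Nat.cast_zero, add_zero, Nat.choose_zero_right, Nat.cast_one, Nat.sub_zero] at hfd
      have hIcc : ∑ l ∈ Icc 1 (n+1), (-1:ℝ)^((n+1)-l) * ((n+1).choose l : ℝ) * (x + (l:ℝ))^n
          = ∑ i ∈ range (n+1), (-1:ℝ)^((n+1)-(i+1)) * ((n+1).choose (i+1) : ℝ) * (x + ((i+1:ℕ):ℝ))^n := by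
        rw [show Icc 1 (n+1) = Ico 1 (n+2) by rfl, Finset.sum_Ico_eq_sum_range]
        apply Finset.sum_congr (by norm_num)
        intro i _
        rw [show 1 + i = i + 1 by omega]
      rw [hIcc]
      have hsum0 : ∑ i ∈ range (n+1), (-1:ℝ)^((n+1)-(i+1)) * ((n+1).choose (i+1) : ℝ) * (x + ((i+1:ℕ):ℝ))^n
          = -((-1:ℝ)^(n+1) * x^n) := by
        have : ∑ i ∈ range (n+1), (-1:ℝ)^((n+1)-(i+1)) * ((n+1).choose (i+1) : ℝ) * (x + ((i+1:ℕ):ℝ))^n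
            = ∑ i ∈ range (n+1), (-1:ℝ)^(n+1-(i+1)) * ((n+1).choose (i+1) : ℝ) * (x + ((i+1:ℕ):ℝ))^n := rfl
        rw [this]
        have := hfd
        push_cast at this ⊢
        linarith [this]
      rw [hsum0]
      have : (-x - ((n+1:ℕ):ℝ) + ((n+1:ℕ):ℝ)) = -x := by ring
      rw [this, neg_pow]
      push_cast
      ring
    have h1 := hconst y (-x - ((n+1:ℕ):ℝ))
    beta_reduce at h1
    rw [h0] at h1
    have hfy : f y = (x + y + ((n+1:ℕ):ℝ))^(n+1) := by linarith
    rw [hf] at hfy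
    beta_reduce at hfy
    exact hfy

lemma abel_II (n : ℕ) (x : ℝ) :
    (n:ℝ) * (n:ℝ)^(n-1) + ∑ l ∈ Icc 1 n, (n.choose l : ℝ) * x * (x + (l:ℝ))^(l-1) *
      (((n-l : ℕ):ℝ) * ((n-l:ℕ):ℝ)^((n-l)-1))
    = (n:ℝ) * (x + (n:ℝ))^(n-1) := by
  have h1 : HasDerivAt (fun y : ℝ => (y + (n:ℝ))^n + ∑ l ∈ Icc 1 n,
        (n.choose l : ℝ) * x * (x + (l:ℝ))^(l-1) * (y + ((n-l : ℕ):ℝ))^(n-l))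
      ((n:ℝ) * ((0:ℝ) + (n:ℝ))^(n-1) * 1 + ∑ l ∈ Icc 1 n, (n.choose l : ℝ) * x * (x + (l:ℝ))^(l-1) *
        (((n-l:ℕ):ℝ) * ((0:ℝ) + ((n-l:ℕ):ℝ))^((n-l)-1) * 1)) 0 :=
    (((hasDerivAt_id 0).add_const _).pow _).add
      (HasDerivAt.fun_sum fun l _ => (((hasDerivAt_id 0).add_const _).pow _).const_mul _)
  have h2 : HasDerivAt (fun y : ℝ => (x + y + (n:ℝ))^n) ((n:ℝ) * (x + 0 + (n:ℝ))^(n-1) * 1) 0 :=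
    (((hasDerivAt_id 0).const_add x).add_const _).pow _
  rw [funext (abel_id n x)] at h1
  have hu := h1.unique h2
  simp only [zero_add, mul_one, add_zero] at hu
  rw [← hu]

lemma abel_III (n : ℕ) :
    ∑ l ∈ Icc 1 n, (n.choose l : ℝ) * (l:ℝ)^(l-1) * (((n-l:ℕ):ℝ) * ((n-l:ℕ):ℝ)^((n-l)-1))
    = (n:ℝ) * (((n-1:ℕ):ℝ) * (n:ℝ)^((n-1)-1)) := by
  have h1 : HasDerivAt (fun x : ℝ => (n:ℝ) * (n:ℝ)^(n-1) + ∑ l ∈ Icc 1 n,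
        (n.choose l : ℝ) * x * (x + (l:ℝ))^(l-1) * (((n-l : ℕ):ℝ) * ((n-l:ℕ):ℝ)^((n-l)-1)))
      (0 + ∑ l ∈ Icc 1 n,
        ((n.choose l : ℝ) * 1 * ((0:ℝ) + (l:ℝ))^(l-1) + (n.choose l : ℝ) * 0 *
          (((l-1:ℕ):ℝ) * ((0:ℝ) + (l:ℝ))^((l-1)-1) * 1)) * (((n-l : ℕ):ℝ) * ((n-l:ℕ):ℝ)^((n-l)-1))) 0 := by
    apply (hasDerivAt_const (0:ℝ) _).add
    apply HasDerivAt.fun_sum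
    intro l _
    exact (((hasDerivAt_id 0).const_mul _).mul (((hasDerivAt_id 0).add_const _).pow _)).mul_const _
  have h2 : HasDerivAt (fun x : ℝ => (n:ℝ) * (x + (n:ℝ))^(n-1))
      ((n:ℝ) * (((n-1:ℕ):ℝ) * ((0:ℝ) + (n:ℝ))^((n-1)-1) * 1)) 0 :=
    (((hasDerivAt_id 0).add_const _).pow _).const_mul _
  rw [funext (abel_II n)] at h1
  have hu := h1.unique h2
  simp only [zero_add, mul_one, mul_zero, zero_mul, mul_one, add_zero] at hu
  rw [← hu]

lemma Tsum (n : ℕ) (hn : 1 ≤ n) :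
    ∑ l ∈ Ico 1 n, (n.choose l : ℝ) * (l:ℝ)^(l-1) * ((n-l:ℕ):ℝ)^((n-l)-1)
      = 2 * ((n-1:ℕ):ℝ) * (n:ℝ)^(n-2) := by
  set F : ℕ → ℝ := fun l => (n.choose l : ℝ) * (l:ℝ)^(l-1) * ((n-l:ℕ):ℝ)^((n-l)-1) with hF
  have hsymm : ∀ l ∈ Ico 1 n, F (n - l) = F l := by
    intro l hl
    simp only [Finset.mem_Ico] at hl
    simp only [hF]
    rw [Nat.choose_symm (by omega), show n - (n - l) = l by omega]
    ring
  have hA : ∑ l ∈ Ico 1 n, ((n-l:ℕ):ℝ) * F l = ∑ l ∈ Ico 1 n, (l:ℝ) * F l := by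
    apply Finset.sum_nbij' (i := fun l => n - l) (j := fun l => n - l)
    · intro l hl; simp only [Finset.mem_Ico] at *; omega
    · intro l hl; simp only [Finset.mem_Ico] at *; omega
    · intro l hl; simp only [Finset.mem_Ico] at hl; omega
    · intro l hl; simp only [Finset.mem_Ico] at hl; omega
    · intro l hl
      rw [hsymm l hl]
  have habel : ∑ l ∈ Ico 1 n, ((n-l:ℕ):ℝ) * F l = (n:ℝ) * (((n-1:ℕ):ℝ) * (n:ℝ)^(n-2)) := by
    have h3 := abel_III n
    have hsplit : Icc 1 n = Ico 1 (n+1) := rfl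
    rw [hsplit, Finset.sum_Ico_succ_top hn] at h3
    simp only [Nat.sub_self, Nat.cast_zero, zero_mul, mul_zero, add_zero] at h3
    rw [show (n-1)-1 = n-2 by omega] at h3
    rw [← h3]
    apply Finset.sum_congr rfl
    intro l _
    simp only [hF]
    ring
  have hsum2 : ∑ l ∈ Ico 1 n, ((n-l:ℕ):ℝ) * F l + ∑ l ∈ Ico 1 n, (l:ℝ) * F l
      = (n:ℝ) * ∑ l ∈ Ico 1 n, F l := by
    rw [← Finset.sum_add_distrib, Finset.mul_sum]
    apply Finset.sum_congr rfl
    intro l hl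
    simp only [Finset.mem_Ico] at hl
    rw [Nat.cast_sub (by omega)]
    ring
  have hn0 : (n:ℝ) ≠ 0 := by positivity
  have : (n:ℝ) * ∑ l ∈ Ico 1 n, F l = (n:ℝ) * (2 * ((n-1:ℕ):ℝ) * (n:ℝ)^(n-2)) := by
    rw [← hsum2, ← hA, habel]; ring
  exact mul_left_cancel₀ hn0 this

/-- the Borel distribution solves the Smoluchowski coagulation
equations with monodisperse initial condition. -/
theorem borel_solves_smoluchowski :
    (∀ k : ℕ, 1 ≤ k → borelDist k 0 = if k = 1 then 1 else 0) ∧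
    (∀ k : ℕ, 1 ≤ k → ∀ t : ℝ, 0 ≤ t →
      HasDerivAt (borelDist k)
        ((k : ℝ) / 2 * ∑ l ∈ Finset.Ico 1 k, borelDist l t * borelDist (k - l) t
          - (k : ℝ) * borelDist k t) t) := by
  constructor
  · intro k hk
    by_cases h1 : k = 1
    · subst h1; simp [borelDist]
    · rw [if_neg h1]
      have : k - 1 ≠ 0 := by omega
      simp [borelDist, zero_pow this]
  · intro k hk t _
    by_cases h1 : k = 1
    · subst h1
      have hb : borelDist 1 = fun t : ℝ => Real.exp (-(1:ℝ) * t) := by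
        funext s; simp [borelDist]
      rw [hb]
      have hd : HasDerivAt (fun t : ℝ => Real.exp (-(1:ℝ) * t))
          (Real.exp (-(1:ℝ) * t) * (-1 * 1)) t :=
        (((hasDerivAt_id t).const_mul (-1 : ℝ))).exp
      convert hd using 1
      simp
    · have hk2 : 2 ≤ k := by omega
      set c : ℝ := (k : ℝ) ^ (k - 1) / (Nat.factorial k : ℝ) with hc
      -- derivative of borelDist k
      have hp : HasDerivAt (fun s : ℝ => c * s ^ (k-1)) (c * (((k-1:ℕ)) * t ^ ((k-1)-1))) t :=
        (hasDerivAt_pow (k-1) t).const_mul c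
      have he : HasDerivAt (fun s : ℝ => Real.exp (-(k:ℝ) * s))
          (Real.exp (-(k:ℝ) * t) * (-(k:ℝ) * 1)) t :=
        ((hasDerivAt_id t).const_mul (-(k:ℝ))).exp
      have hd := hp.fun_mul he
      have hfun : (fun s : ℝ => (c * s ^ (k-1)) * Real.exp (-(k:ℝ) * s)) = borelDist k := by
        funext s; simp only [borelDist, hc]
      rw [hfun] at hd
      -- compute the sum
      have hterm : ∀ l ∈ Ico 1 k, borelDist l t * borelDist (k - l) t
          = ((k.choose l : ℝ) * (l:ℝ)^(l-1) * ((k-l:ℕ):ℝ)^((k-l)-1) / (Nat.factorial k : ℝ))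
            * (t^(k-2) * Real.exp (-(k:ℝ) * t)) := by
        intro l hl
        simp only [Finset.mem_Ico] at hl
        have hlk : l ≤ k := by omega
        have h1 : t^(l-1) * t^((k-l)-1) = t^(k-2) := by
          rw [← pow_add]; congr 1; omega
        have h2 : Real.exp (-(l:ℝ) * t) * Real.exp (-((k-l:ℕ):ℝ) * t)
            = Real.exp (-(k:ℝ) * t) := by
          rw [← Real.exp_add]; congr 1; rw [Nat.cast_sub hlk]; ring
        have hfac : (Nat.factorial k : ℝ)
            = (k.choose l : ℝ) * (Nat.factorial l : ℝ) * (Nat.factorial (k-l) : ℝ) := by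
          exact_mod_cast (Nat.choose_mul_factorial_mul_factorial hlk).symm
        have hl0 : (Nat.factorial l : ℝ) ≠ 0 := by positivity
        have hkl0 : (Nat.factorial (k-l) : ℝ) ≠ 0 := by positivity
        have hch0 : (k.choose l : ℝ) ≠ 0 := by
          have := Nat.choose_pos hlk; positivity
        calc borelDist l t * borelDist (k - l) t
            = ((l:ℝ)^(l-1) * ((k-l:ℕ):ℝ)^((k-l)-1) / ((Nat.factorial l : ℝ) * (Nat.factorial (k-l) : ℝ)))
              * ((t^(l-1) * t^((k-l)-1)) * (Real.exp (-(l:ℝ) * t) * Real.exp (-((k-l:ℕ):ℝ) * t))) := by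
              simp only [borelDist]; ring
          _ = ((k.choose l : ℝ) * (l:ℝ)^(l-1) * ((k-l:ℕ):ℝ)^((k-l)-1) / (Nat.factorial k : ℝ))
              * (t^(k-2) * Real.exp (-(k:ℝ) * t)) := by
              rw [h1, h2, hfac]
              congr 1
              rw [div_eq_div_iff (by positivity) (by positivity)]
              ring
      rw [Finset.sum_congr rfl hterm, ← Finset.sum_mul, ← Finset.sum_div, Tsum k (by omega)]
      -- final algebra
      have hkpow : (k:ℝ)^(k-1) = (k:ℝ) * (k:ℝ)^(k-2) := by
        rw [← pow_succ']; congr 1; omega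
      have hcast : ((k-1:ℕ):ℝ) = (k:ℝ) - 1 := by
        rw [Nat.cast_sub (by omega)]; simp
      have htpow : t^(k-1) = t^(k-2) * t := by
        rw [← pow_succ]; congr 1; omega
      have hfk0 : (Nat.factorial k : ℝ) ≠ 0 := by positivity
      refine hd.congr_deriv ?_
      simp only [borelDist, hc, hcast, show (k-1)-1 = k-2 by omega, htpow, hkpow]
      field_simp
      ring
end

section
/- For k ≥ 1 let v_k := 2 · C(2k−2, k−1) · (1/k) · 4^{−k}, where C(n, m) denotes the binomial coefficient. Then Σ_{k=1}^∞ v_k = 1, and for every k ≥ 2 one has Σ_{l=1}^{k−1} v_l v_{k−l} = 2 v_k (equivalently, 0 = (k/2)Σ_{l=1}^{k−1} v_l v_{k−l} − k v_k), so (v_k) is a stationary solution of the critical forest fire equations. -/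
open Finset Filter

/-- The stationary cluster size distribution of the critical forest fire equations:
`v_k = 2 · C(2k−2, k−1) · (1/k) · 4^(−k)`. -/
noncomputable def vStat (k : ℕ) : ℝ :=
  2 * (Nat.choose (2 * k - 2) (k - 1) : ℝ) * (1 / (k : ℝ)) * (4 : ℝ) ^ (-(k : ℤ))

lemma vStat_succ (n : ℕ) :
    vStat (n + 1) = (catalan n : ℝ) * (4 : ℝ) ^ (-(n : ℤ)) / 2 := by
  have h : (2 * (n + 1) - 2).choose ((n + 1) - 1) = (n + 1) * catalan n := by
    have := succ_mul_catalan_eq_centralBinom n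
    simpa [Nat.centralBinom, Nat.mul_succ] using this.symm
  have hn : ((n : ℝ) + 1) ≠ 0 := by positivity
  rw [vStat, h]
  push_cast
  rw [show (-((n : ℕ) + 1 : ℤ)) = -(n : ℤ) + (-1) by ring, zpow_add₀ (by norm_num : (4:ℝ) ≠ 0)]
  field_simp
  ring

lemma cb_succ_real (n : ℕ) :
    ((n : ℝ) + 1) * (Nat.centralBinom (n + 1) : ℝ)
      = 2 * (2 * (n : ℝ) + 1) * (Nat.centralBinom n : ℝ) := by
  exact_mod_cast Nat.succ_mul_centralBinom_succ n

lemma cat_real (n : ℕ) :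
    ((n : ℝ) + 1) * (catalan n : ℝ) = (Nat.centralBinom n : ℝ) := by
  exact_mod_cast succ_mul_catalan_eq_centralBinom n

lemma partial_sum (N : ℕ) :
    ∑ n ∈ range N, (catalan n : ℝ) * (4 : ℝ) ^ (-(n : ℤ))
      = 2 - 2 * (Nat.centralBinom N : ℝ) * (4 : ℝ) ^ (-(N : ℤ)) := by
  induction N with
  | zero => simp [Nat.centralBinom]
  | succ N ih =>
    rw [Finset.sum_range_succ, ih]
    have h1 := cat_real N
    have h2 := cb_succ_real N
    have hx : (4 : ℝ) ^ (-((N : ℕ) + 1 : ℤ)) = (4 : ℝ) ^ (-(N : ℤ)) / 4 := by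
      rw [show (-((N : ℕ) + 1 : ℤ)) = -(N : ℤ) + (-1) by ring,
        zpow_add₀ (by norm_num : (4:ℝ) ≠ 0)]
      norm_num
      ring
    push_cast
    rw [hx]
    have hn : ((N : ℝ) + 1) ≠ 0 := by positivity
    set x := (4 : ℝ) ^ (-(N : ℤ))
    have key : ((N:ℝ)+1) * ((catalan N : ℝ) * x
        + 2 * ((N+1).centralBinom : ℝ) * (x/4) - 2 * (Nat.centralBinom N : ℝ) * x) = 0 := by
      linear_combination x * h1 + (x/2) * h2
    have key2 := (mul_eq_zero.mp key).resolve_left hn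
    linarith

noncomputable def aCB (n : ℕ) : ℝ := (Nat.centralBinom n : ℝ) * (4 : ℝ) ^ (-(n : ℤ))

lemma aCB_nonneg (n : ℕ) : 0 ≤ aCB n := by
  unfold aCB; positivity

lemma aCB_succ (n : ℕ) : aCB (n + 1) = aCB n * (2 * (n:ℝ) + 1) / (2 * ((n:ℝ) + 1)) := by
  have h2 := cb_succ_real n
  have hn : ((n : ℝ) + 1) ≠ 0 := by positivity
  unfold aCB
  have hx : (4 : ℝ) ^ (-((n : ℕ) + 1 : ℤ)) = (4 : ℝ) ^ (-(n : ℤ)) / 4 := by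
    rw [show (-((n : ℕ) + 1 : ℤ)) = -(n : ℤ) + (-1) by ring,
      zpow_add₀ (by norm_num : (4:ℝ) ≠ 0)]
    norm_num
    ring
  push_cast
  rw [hx]
  set x := (4 : ℝ) ^ (-(n : ℤ))
  rw [eq_div_iff (by positivity : (2*((n:ℝ)+1)) ≠ 0)]
  linear_combination (x/2) * h2

lemma aCB_sq_le (n : ℕ) : aCB n ^ 2 ≤ 1 / ((n : ℝ) + 1) := by
  induction n with
  | zero => simp [aCB, Nat.centralBinom]
  | succ n ih =>
    rw [aCB_succ]
    have hn : (0:ℝ) < (n : ℝ) + 1 := by positivity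
    have h1 : (aCB n * (2 * (n:ℝ) + 1) / (2 * ((n:ℝ) + 1))) ^ 2
        = aCB n ^ 2 * ((2 * (n:ℝ) + 1) / (2 * ((n:ℝ) + 1))) ^ 2 := by ring
    rw [h1]
    have h2 : ((2 * (n:ℝ) + 1) / (2 * ((n:ℝ) + 1))) ^ 2 ≤ ((n:ℝ)+1)/((n:ℝ)+2) := by
      rw [div_pow, div_le_div_iff₀ (by positivity) (by positivity)]
      nlinarith
    have h3 : aCB n ^ 2 * ((2 * (n:ℝ) + 1) / (2 * ((n:ℝ) + 1))) ^ 2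
        ≤ (1/((n:ℝ)+1)) * (((n:ℝ)+1)/((n:ℝ)+2)) := by
      apply mul_le_mul ih h2 (by positivity)
      positivity
    calc _ ≤ (1/((n:ℝ)+1)) * (((n:ℝ)+1)/((n:ℝ)+2)) := h3
      _ = 1 / ((n:ℝ)+2) := by field_simp
      _ = 1 / (((n:ℕ)+1 : ℕ) + 1 : ℝ) := by push_cast; ring_nf

lemma aCB_tendsto : Filter.Tendsto aCB Filter.atTop (nhds 0) := by
  have hsq : Filter.Tendsto (fun n => aCB n ^ 2) Filter.atTop (nhds 0) := by
    apply squeeze_zero (fun n => sq_nonneg _) aCB_sq_le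
    exact tendsto_one_div_add_atTop_nhds_zero_nat
  have := hsq.sqrt
  rw [Real.sqrt_zero] at this
  convert this using 1
  funext n
  rw [Real.sqrt_sq (aCB_nonneg n)]

lemma catalan_succ_range (m : ℕ) :
    (catalan (m + 1) : ℝ) = ∑ i ∈ range (m + 1), (catalan i : ℝ) * (catalan (m - i) : ℝ) := by
  have h : catalan (m + 1) = ∑ i ∈ range (m + 1), catalan i * catalan (m - i) := by
    rw [catalan_succ]
    exact Fin.sum_univ_eq_sum_range (fun i => catalan i * catalan (m - i)) (m + 1)
  rw [h]
  push_cast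
  rfl


/-- `(v_k)` sums to one and is a stationary solution of the critical
forest fire equations: for every `k ≥ 2` the coagulation terms cancel. -/
theorem vStat_stationary :
    HasSum (fun k : ℕ => vStat (k + 1)) 1 ∧
    ∀ k : ℕ, 2 ≤ k →
      (∑ l ∈ Finset.Ico 1 k, vStat l * vStat (k - l) = 2 * vStat k ∧
        (0 : ℝ) = (k : ℝ) / 2 * ∑ l ∈ Finset.Ico 1 k, vStat l * vStat (k - l)
          - (k : ℝ) * vStat k) := by
  constructor
  · rw [hasSum_iff_tendsto_nat_of_nonneg (fun i => by rw [vStat_succ]; positivity)]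
    have heq : ∀ N : ℕ, ∑ k ∈ range N, vStat (k + 1) = 1 - aCB N := by
      intro N
      simp_rw [vStat_succ]
      rw [← Finset.sum_div, partial_sum]
      unfold aCB; ring
    simp_rw [heq]
    simpa using (tendsto_const_nhds (x := (1:ℝ)) (f := Filter.atTop)).sub aCB_tendsto
  · intro k hk
    obtain ⟨m, rfl⟩ : ∃ m, k = m + 2 := ⟨k - 2, by omega⟩
    have main : ∑ l ∈ Finset.Ico 1 (m + 2), vStat l * vStat (m + 2 - l)
        = 2 * vStat (m + 2) := by
      rw [Finset.sum_Ico_eq_sum_range]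
      have hr : m + 2 - 1 = m + 1 := by omega
      rw [hr]
      have hcong : ∀ i ∈ range (m + 1), vStat (1 + i) * vStat (m + 2 - (1 + i))
          = (catalan i : ℝ) * (catalan (m - i) : ℝ) * ((4:ℝ) ^ (-(m:ℤ)) / 4) := by
        intro i hi
        have him : i ≤ m := by simpa [Nat.lt_succ_iff] using Finset.mem_range.mp hi
        have h1 : 1 + i = i + 1 := by omega
        have h2 : m + 2 - (1 + i) = (m - i) + 1 := by omega
        rw [h2, h1, vStat_succ, vStat_succ]
        have hz : ((m - i : ℕ) : ℤ) = (m : ℤ) - (i : ℤ) := by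
          push_cast [Nat.cast_sub him]; ring
        rw [hz]
        have hpow : (4:ℝ) ^ (-(i:ℤ)) * (4:ℝ) ^ (-((m:ℤ) - (i:ℤ))) = (4:ℝ) ^ (-(m:ℤ)) := by
          rw [← zpow_add₀ (by norm_num : (4:ℝ) ≠ 0)]
          ring_nf
        calc (catalan i : ℝ) * (4:ℝ) ^ (-(i:ℤ)) / 2
              * ((catalan (m - i) : ℝ) * (4:ℝ) ^ (-((m:ℤ) - (i:ℤ))) / 2)
            = (catalan i : ℝ) * (catalan (m - i) : ℝ)
              * ((4:ℝ) ^ (-(i:ℤ)) * (4:ℝ) ^ (-((m:ℤ) - (i:ℤ))) / 4) := by ring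
          _ = _ := by rw [hpow]
      rw [Finset.sum_congr rfl hcong, ← Finset.sum_mul, ← catalan_succ_range]
      have h3 : (m + 2 : ℕ) = (m + 1) + 1 := rfl
      rw [h3, vStat_succ]
      have hx : (4 : ℝ) ^ (-((m : ℕ) + 1 : ℤ)) = (4 : ℝ) ^ (-(m : ℤ)) / 4 := by
        rw [show (-((m : ℕ) + 1 : ℤ)) = -(m : ℤ) + (-1) by ring,
          zpow_add₀ (by norm_num : (4:ℝ) ≠ 0)]
        norm_num
        ring
      push_cast
      rw [hx]
      ring
    refine ⟨main, ?_⟩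
    rw [main]
    ring
end

section
/- Let λ > 0, let v_k := 2 · C(2k−2, k−1) · (1/k) · 4^{−k}, and define w_k := (λ+1) · (1 − λ²/(1+λ)²)^k · v_k for k ≥ 1. Then: (i) Σ_{k=1}^∞ w_k = 1; (ii) Σ_{k=1}^∞ k·w_k < ∞ and (1+λ)·w₁ = λ·Σ_{k=1}^∞ k·w_k; (iii) for every k ≥ 2, Σ_{l=1}^{k−1} w_l w_{k−l} = 2(1+λ)·w_k. Consequently (w_k) is a stationary solution of the forest fire equations with lightning rate λ: 0 = (k/2)Σ_{l=1}^{k−1} w_l w_{k−l} − k w_k − λ k w_k + λ·1_{k=1}·Σ_{l=1}^∞ l w_l for all k ≥ 1. -/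
open Finset

lemma my_centralBinom_le_four_pow (n : ℕ) : Nat.centralBinom n ≤ 4 ^ n := by
  have h : (2 * n).choose n ≤ ∑ m ∈ Finset.range (2 * n + 1), (2 * n).choose m :=
    Finset.single_le_sum (fun i _ => Nat.zero_le _) (Finset.mem_range.2 (by omega))
  calc Nat.centralBinom n = (2 * n).choose n := rfl
    _ ≤ 2 ^ (2 * n) := by rw [← Nat.sum_range_choose]; exact h
    _ = 4 ^ n := by rw [pow_mul]; norm_num

lemma my_catalan_le_four_pow (n : ℕ) : catalan n ≤ 4 ^ n :=
  calc catalan n ≤ (n + 1) * catalan n := Nat.le_mul_of_pos_left _ (by omega)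
    _ = Nat.centralBinom n := succ_mul_catalan_eq_centralBinom n
    _ ≤ 4 ^ n := my_centralBinom_le_four_pow n

lemma my_catalan_pos (n : ℕ) : 0 < catalan n := by
  rcases Nat.eq_zero_or_pos (catalan n) with h | h
  · have h1 := succ_mul_catalan_eq_centralBinom n
    have h2 := Nat.centralBinom_pos n
    rw [h, Nat.mul_zero] at h1
    omega
  · exact h

noncomputable def wStat (lam : ℝ) (k : ℕ) : ℝ :=
  (lam + 1) * (1 - lam ^ 2 / (1 + lam) ^ 2) ^ k * vStat k

lemma wStat_succ_eq (lam : ℝ) (hlam : 0 < lam) (n : ℕ) :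
    wStat lam (n + 1)
      = 2 * (lam + 1) * (catalan n : ℝ) * ((1 - lam ^ 2 / (1 + lam) ^ 2) / 4) ^ (n + 1) := by
  have hn1 : ((n : ℝ) + 1) ≠ 0 := by positivity
  have hc : (((2 * (n + 1) - 2).choose ((n + 1) - 1) : ℕ) : ℝ) = ((n : ℝ) + 1) * catalan n := by
    have h1 : 2 * (n + 1) - 2 = 2 * n := by omega
    have h2 : (n + 1) - 1 = n := by omega
    rw [h1, h2]
    have h3 : (2 * n).choose n = (n + 1) * catalan n :=
      (succ_mul_catalan_eq_centralBinom n).symm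
    rw [h3]; push_cast; ring
  unfold wStat vStat
  rw [hc]
  have hz : (4 : ℝ) ^ (-((n + 1 : ℕ) : ℤ)) = ((4 : ℝ) ^ (n + 1))⁻¹ := by
    rw [zpow_neg, zpow_natCast]
  rw [hz, div_pow]
  push_cast
  field_simp

set_option maxHeartbeats 1000000 in
/-- `(w_k)` is a probability distribution with finite first moment
satisfying `(1+λ) w₁ = λ ∑ k w_k` and `∑_{l=1}^{k−1} w_l w_{k−l} = 2(1+λ) w_k` for
`k ≥ 2`; consequently it is a stationary solution of the forest fire equations with
lightning rate `λ`. -/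
theorem wStat_stationary (lam : ℝ) (hlam : 0 < lam) :
    HasSum (fun k : ℕ => wStat lam (k + 1)) 1 ∧
    Summable (fun k : ℕ => ((k : ℝ) + 1) * wStat lam (k + 1)) ∧
    (1 + lam) * wStat lam 1 = lam * ∑' k : ℕ, ((k : ℝ) + 1) * wStat lam (k + 1) ∧
    (∀ k : ℕ, 2 ≤ k →
      ∑ l ∈ Finset.Ico 1 k, wStat lam l * wStat lam (k - l) = 2 * (1 + lam) * wStat lam k) ∧
    (∀ k : ℕ, 1 ≤ k →
      (0 : ℝ) = (k : ℝ) / 2 * ∑ l ∈ Finset.Ico 1 k, wStat lam l * wStat lam (k - l)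
        - (k : ℝ) * wStat lam k - lam * (k : ℝ) * wStat lam k
        + lam * (if k = 1 then 1 else 0) * ∑' l : ℕ, ((l : ℝ) + 1) * wStat lam (l + 1)) := by
  set x : ℝ := (1 - lam ^ 2 / (1 + lam) ^ 2) / 4 with hxdef
  have hlam1 : (0 : ℝ) < 1 + lam := by linarith
  have hr0 : 0 < 1 - lam ^ 2 / (1 + lam) ^ 2 := by
    rw [sub_pos, div_lt_one (by positivity)]
    nlinarith
  have hr1 : 1 - lam ^ 2 / (1 + lam) ^ 2 < 1 := by
    have : 0 < lam ^ 2 / (1 + lam) ^ 2 := by positivity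
    linarith
  have hx0 : 0 < x := by rw [hxdef]; linarith
  have h4x : 4 * x < 1 := by rw [hxdef]; linarith
  set u : ℕ → ℝ := fun n => wStat lam (n + 1) with hudef
  have hu : ∀ n, u n = 2 * (lam + 1) * (catalan n : ℝ) * x ^ (n + 1) := fun n =>
    wStat_succ_eq lam hlam n
  have hupos : ∀ n, 0 < u n := by
    intro n
    rw [hu n]
    have := my_catalan_pos n
    have hcat : (0 : ℝ) < (catalan n : ℝ) := by exact_mod_cast this
    positivity
  have hubound : ∀ n, u n ≤ (2 * (lam + 1) * x) * (4 * x) ^ n := by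
    intro n
    rw [hu n]
    have hcat : (catalan n : ℝ) ≤ 4 ^ n := by exact_mod_cast my_catalan_le_four_pow n
    calc 2 * (lam + 1) * (catalan n : ℝ) * x ^ (n + 1)
        ≤ 2 * (lam + 1) * (4 : ℝ) ^ n * x ^ (n + 1) := by
          apply mul_le_mul_of_nonneg_right _ (by positivity)
          apply mul_le_mul_of_nonneg_left hcat (by positivity)
      _ = (2 * (lam + 1) * x) * (4 * x) ^ n := by rw [mul_pow, pow_succ]; ring
  have hgeo : Summable (fun n : ℕ => (2 * (lam + 1) * x) * (4 * x) ^ n) :=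
    (summable_geometric_of_lt_one (by positivity) h4x).mul_left _
  have husum : Summable u :=
    hgeo.of_nonneg_of_le (fun n => (hupos n).le) hubound
  set a : ℕ → ℝ := fun n => ((n : ℝ) + 1) * u n with hadef
  have hasum : Summable a := by
    have hb : Summable (fun n : ℕ => (n : ℝ) ^ 1 * (4 * x) ^ n) :=
      summable_pow_mul_geometric_of_norm_lt_one 1
        (by rw [Real.norm_eq_abs, abs_of_pos (by positivity)]; exact h4x)
    have hc : Summable (fun n : ℕ => (4 * x) ^ n) :=
      summable_geometric_of_lt_one (by positivity) h4x
    have h1 : Summable (fun n : ℕ => ((n : ℝ) + 1) * ((2 * (lam + 1) * x) * (4 * x) ^ n)) := by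
      have := (hb.add hc).mul_left (2 * (lam + 1) * x)
      apply this.congr
      intro n; simp only [pow_one]; ring
    apply h1.of_nonneg_of_le
    · intro n; exact mul_nonneg (by positivity) (hupos n).le
    · intro n
      exact mul_le_mul_of_nonneg_left (hubound n) (by positivity)
  set S : ℝ := ∑' n, u n with hSdef
  set T : ℝ := ∑' n, a n with hTdef
  have hunorm : Summable (fun n => ‖u n‖) := by
    apply husum.congr; intro n; rw [Real.norm_eq_abs, abs_of_pos (hupos n)]
  have hanorm : Summable (fun n => ‖a n‖) := by
    apply hasum.congr; intro n
    rw [Real.norm_eq_abs, abs_of_nonneg (mul_nonneg (by positivity) (hupos n).le)]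
  -- the convolution identity
  have hconv : ∀ n : ℕ,
      ∑ k ∈ Finset.range (n + 1), u k * u (n - k) = 2 * (1 + lam) * u (n + 1) := by
    intro n
    have h2 : ∑ k ∈ Finset.range (n + 1), (catalan k : ℝ) * (catalan (n - k) : ℝ)
        = (catalan (n + 1) : ℝ) := by
      rw [catalan_succ n]
      push_cast [Fin.sum_univ_eq_sum_range (fun i => (catalan i : ℝ) * (catalan (n - i) : ℝ))]
      simp [Nat.succ_eq_add_one]
    have h1 : ∑ k ∈ Finset.range (n + 1), u k * u (n - k)
        = 4 * (lam + 1) ^ 2 * x ^ (n + 2)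
          * ∑ k ∈ Finset.range (n + 1), (catalan k : ℝ) * (catalan (n - k) : ℝ) := by
      rw [Finset.mul_sum]
      apply Finset.sum_congr rfl
      intro k hk
      have hkn : k ≤ n := by have := Finset.mem_range.1 hk; omega
      rw [hu k, hu (n - k)]
      have hxp : x ^ (k + 1) * x ^ ((n - k) + 1) = x ^ (n + 2) := by
        rw [← pow_add]; congr 1; omega
      linear_combination
        (4 * (lam + 1) ^ 2 * (catalan k : ℝ) * (catalan (n - k) : ℝ)) * hxp
    rw [h1, h2, hu (n + 1)]
    ring
  -- Cauchy products
  have hSS : S * S = ∑' n, ∑ k ∈ Finset.range (n + 1), u k * u (n - k) :=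
    tsum_mul_tsum_eq_tsum_sum_range_of_summable_norm hunorm hunorm
  have hconvsum : Summable (fun n => ∑ k ∈ Finset.range (n + 1), u k * u (n - k)) :=
    (summable_norm_sum_mul_range_of_summable_norm hunorm hunorm).of_norm
  have hshift : S = u 0 + ∑' n, u (n + 1) := Summable.tsum_eq_zero_add husum
  have hashift : T = a 0 + ∑' n, a (n + 1) := Summable.tsum_eq_zero_add hasum
  have husum' : Summable (fun n => u (n + 1)) := by
    rw [← summable_nat_add_iff 1] at husum; exact husum
  have hasum' : Summable (fun n => a (n + 1)) := by
    rw [← summable_nat_add_iff 1] at hasum; exact hasum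
  have hS2 : S * S = 2 * (1 + lam) * (S - u 0) := by
    rw [hSS]
    have : ∑' n, ∑ k ∈ Finset.range (n + 1), u k * u (n - k)
        = ∑' n, 2 * (1 + lam) * u (n + 1) := by
      apply tsum_congr; intro n; exact hconv n
    rw [this, tsum_mul_left]
    have : ∑' n, u (n + 1) = S - u 0 := by rw [hshift]; ring
    rw [this]
  -- first-moment Cauchy products
  have hTS : T * S = ∑' n, ∑ k ∈ Finset.range (n + 1), a k * u (n - k) :=
    tsum_mul_tsum_eq_tsum_sum_range_of_summable_norm hanorm hunorm
  have hST : S * T = ∑' n, ∑ k ∈ Finset.range (n + 1), u k * a (n - k) :=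
    tsum_mul_tsum_eq_tsum_sum_range_of_summable_norm hunorm hanorm
  have hTSsum : Summable (fun n => ∑ k ∈ Finset.range (n + 1), a k * u (n - k)) :=
    (summable_norm_sum_mul_range_of_summable_norm hanorm hunorm).of_norm
  have hSTsum : Summable (fun n => ∑ k ∈ Finset.range (n + 1), u k * a (n - k)) :=
    (summable_norm_sum_mul_range_of_summable_norm hunorm hanorm).of_norm
  have hcombine : ∀ n : ℕ,
      (∑ k ∈ Finset.range (n + 1), a k * u (n - k))
        + (∑ k ∈ Finset.range (n + 1), u k * a (n - k))
      = 2 * (1 + lam) * a (n + 1) := by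
    intro n
    have h1 : (∑ k ∈ Finset.range (n + 1), a k * u (n - k))
        + (∑ k ∈ Finset.range (n + 1), u k * a (n - k))
        = ∑ k ∈ Finset.range (n + 1), ((n : ℝ) + 2) * (u k * u (n - k)) := by
      rw [← Finset.sum_add_distrib]
      apply Finset.sum_congr rfl
      intro k hk
      have hkn : k ≤ n := by have := Finset.mem_range.1 hk; omega
      have hcast : ((n - k : ℕ) : ℝ) = (n : ℝ) - (k : ℝ) := by
        push_cast [Nat.cast_sub hkn]; ring
      simp only [hadef, hcast]
      ring
    rw [h1, ← Finset.mul_sum, hconv n]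
    simp only [hadef]
    push_cast
    ring
  have hT2 : T * S + S * T = 2 * (1 + lam) * (T - a 0) := by
    rw [hTS, hST, ← Summable.tsum_add hTSsum hSTsum]
    have : ∑' n, ((∑ k ∈ Finset.range (n + 1), a k * u (n - k))
        + (∑ k ∈ Finset.range (n + 1), u k * a (n - k)))
        = ∑' n, 2 * (1 + lam) * a (n + 1) := by
      apply tsum_congr; intro n; exact hcombine n
    rw [this, tsum_mul_left]
    have : ∑' n, a (n + 1) = T - a 0 := by rw [hashift]; ring
    rw [this]
  -- value of u 0
  have hu0 : u 0 = (1 + 2 * lam) / (2 * (1 + lam)) := by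
    rw [hu 0, hxdef]
    simp only [catalan_zero, Nat.cast_one, zero_add, pow_one]
    have hne : (1 + lam) ≠ 0 := ne_of_gt hlam1
    field_simp
    ring
  have hu0pos : 0 < u 0 := hupos 0
  have hTpos : 0 < T := by
    have h1 : a 0 ≤ T := by
      apply Summable.le_tsum hasum 0
      intro m _
      exact mul_nonneg (by positivity) (hupos m).le
    have : 0 < a 0 := by simp only [hadef]; simpa using hu0pos
    linarith
  have ha0 : a 0 = u 0 := by simp [hadef]
  -- S = 1
  have hSval : S = 1 := by
    have hquad : (S - 1) * (S - (1 + 2 * lam)) = 0 := by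
      have h1 : 2 * (1 + lam) * u 0 = 1 + 2 * lam := by
        rw [hu0]; field_simp
      nlinarith [hS2]
    rcases mul_eq_zero.1 hquad with h | h
    · linarith
    · exfalso
      have hS : S = 1 + 2 * lam := by linarith
      rw [hS, ha0] at hT2
      nlinarith [hT2, hu0pos, hTpos]
  -- the moment identity
  have hmom : (1 + lam) * u 0 = lam * T := by
    rw [hSval, ha0] at hT2
    nlinarith [hT2]
  -- part (iv)
  have hpart4 : ∀ k : ℕ, 2 ≤ k →
      ∑ l ∈ Finset.Ico 1 k, wStat lam l * wStat lam (k - l) = 2 * (1 + lam) * wStat lam k := by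
    intro k hk
    obtain ⟨m, rfl⟩ : ∃ m, k = m + 2 := ⟨k - 2, by omega⟩
    have hre : ∑ l ∈ Finset.Ico 1 (m + 2), wStat lam l * wStat lam ((m + 2) - l)
        = ∑ i ∈ Finset.range (m + 1), wStat lam (1 + i) * wStat lam ((m + 2) - (1 + i)) := by
      rw [Finset.sum_Ico_eq_sum_range]
      norm_num
    rw [hre]
    have hterm : ∀ i ∈ Finset.range (m + 1),
        wStat lam (1 + i) * wStat lam ((m + 2) - (1 + i)) = u i * u (m - i) := by
      intro i hi
      have him : i ≤ m := by have := Finset.mem_range.1 hi; omega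
      have e1 : 1 + i = i + 1 := by omega
      have e2 : (m + 2) - (1 + i) = (m - i) + 1 := by omega
      rw [e2, e1]
    rw [Finset.sum_congr rfl hterm, hconv m]
  constructor
  · -- HasSum u 1
    rw [← hSval]
    exact husum.hasSum
  refine ⟨hasum, ?_, hpart4, ?_⟩
  · -- moment equation
    exact hmom
  · -- stationarity
    intro k hk
    rcases eq_or_lt_of_le hk with h1 | h2
    · -- k = 1
      have hk1 : k = 1 := h1.symm
      subst hk1
      simp only [if_pos rfl]
      rw [show Finset.Ico 1 1 = ∅ from rfl]
      simp only [Finset.sum_empty, mul_zero]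
      have h2 : wStat lam 1 = u 0 := rfl
      rw [h2]
      norm_num
      linarith [hmom]
    · -- k ≥ 2
      have hk2 : 2 ≤ k := h2
      have hne : k ≠ 1 := by omega
      rw [if_neg hne, hpart4 k hk2]
      ring
end

section
/- Let v = (v_k)_{k≥1} be nonnegative reals with Σ_{k=1}^∞ v_k = 1, and let V(x) := Σ_{k=1}^∞ v_k e^{−kx} − 1. Define E(x) := −V'(x)³/V''(x) and E*(x) := sup_{0 < y ≤ x} E(y) (a value in (0,∞]). Then for every x > 0: 0 < V(x)·V'(x) ≤ E*(x). -/
open Real Set Filter Topology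

noncomputable def Sgen (v : ℕ → ℝ) (p : ℕ) (t : ℝ) : ℝ :=
  ∑' k : ℕ, ((k : ℝ) + 1) ^ p * v (k + 1) * Real.exp (-((k : ℝ) + 1) * t)

lemma summable_Sgen {v : ℕ → ℝ} (hnn : ∀ k : ℕ, 1 ≤ k → 0 ≤ v k)
    (hb : ∀ k : ℕ, v (k + 1) ≤ 1) (p : ℕ) {t : ℝ} (ht : 0 < t) :
    Summable (fun k : ℕ => ((k : ℝ) + 1) ^ p * v (k + 1) * Real.exp (-((k : ℝ) + 1) * t)) := by
  have hr : ‖Real.exp (-t)‖ < 1 := by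
    rw [Real.norm_eq_abs, abs_of_pos (Real.exp_pos _)]
    exact Real.exp_lt_one_iff.2 (by linarith)
  have h1 : Summable (fun n : ℕ => (n : ℝ) ^ p * Real.exp (-t) ^ n) :=
    summable_pow_mul_geometric_of_norm_lt_one p hr
  have h2 : Summable (fun k : ℕ => ((k : ℝ) + 1) ^ p * Real.exp (-t) ^ (k + 1)) := by
    have := (summable_nat_add_iff 1).2 h1
    simpa using this
  refine Summable.of_nonneg_of_le (fun k => ?_) (fun k => ?_) h2
  · have := hnn (k + 1) (by omega)
    positivity
  · have hv := hb k
    have hvnn := hnn (k + 1) (by omega)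
    have hexp : Real.exp (-((k : ℝ) + 1) * t) = Real.exp (-t) ^ (k + 1) := by
      rw [← Real.exp_nat_mul]; congr 1; push_cast; ring
    rw [hexp]
    calc ((k : ℝ) + 1) ^ p * v (k + 1) * Real.exp (-t) ^ (k + 1)
        ≤ ((k : ℝ) + 1) ^ p * 1 * Real.exp (-t) ^ (k + 1) := by
          gcongr
      _ = ((k : ℝ) + 1) ^ p * Real.exp (-t) ^ (k + 1) := by ring

lemma hasDerivAt_Sgen {v : ℕ → ℝ} (hnn : ∀ k : ℕ, 1 ≤ k → 0 ≤ v k)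
    (hb : ∀ k : ℕ, v (k + 1) ≤ 1) (p : ℕ) {t : ℝ} (ht : 0 < t) :
    HasDerivAt (Sgen v p) (-(Sgen v (p + 1) t)) t := by
  set u : ℕ → ℝ := fun k => ((k : ℝ) + 1) ^ (p + 1) * Real.exp (-((k : ℝ) + 1) * (t / 2)) with hu_def
  have hu : Summable u := by
    have := summable_Sgen (v := fun _ => 1) (fun _ _ => zero_le_one) (fun _ => le_refl 1)
      (p + 1) (half_pos ht)
    simpa [hu_def] using this
  have key := hasDerivAt_tsum_of_isPreconnected (F := ℝ)
    (g := fun (n : ℕ) (z : ℝ) => ((n : ℝ) + 1) ^ p * v (n + 1) * Real.exp (-((n : ℝ) + 1) * z))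
    (g' := fun (n : ℕ) (y : ℝ) => -(((n : ℝ) + 1) ^ (p + 1) * v (n + 1) * Real.exp (-((n : ℝ) + 1) * y)))
    hu isOpen_Ioi (convex_Ioi (t / 2)).isPreconnected
    (fun (n : ℕ) (y : ℝ) _ => by
      have hlin : HasDerivAt (fun z : ℝ => -((n : ℝ) + 1) * z) (-((n : ℝ) + 1)) y := by
        simpa using (hasDerivAt_id y).const_mul (-((n : ℝ) + 1))
      have h2 := (hlin.exp).const_mul (((n : ℝ) + 1) ^ p * v (n + 1))
      convert h2 using 1
      · rfl
      ring)
    (fun (n : ℕ) (y : ℝ) hy => by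
      have hvnn := hnn (n + 1) (by omega)
      have hv := hb n
      have hyt : t / 2 ≤ y := le_of_lt hy
      rw [norm_neg, Real.norm_eq_abs, abs_of_nonneg (by positivity)]
      calc ((n : ℝ) + 1) ^ (p + 1) * v (n + 1) * Real.exp (-((n : ℝ) + 1) * y)
          ≤ ((n : ℝ) + 1) ^ (p + 1) * 1 * Real.exp (-((n : ℝ) + 1) * (t / 2)) := by
            have hE : Real.exp (-((n : ℝ) + 1) * y) ≤ Real.exp (-((n : ℝ) + 1) * (t / 2)) :=
              Real.exp_le_exp.2 (by nlinarith [Nat.cast_nonneg (α := ℝ) n])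
            exact mul_le_mul (mul_le_mul_of_nonneg_left hv (by positivity)) hE
              (by positivity) (by positivity)
        _ = u n := by rw [hu_def]; ring)
    (mem_Ioi.2 (half_lt_self ht))
    (summable_Sgen hnn hb p ht)
    (mem_Ioi.2 (half_lt_self ht))
  have htsum : (∑' n : ℕ, -(((n : ℝ) + 1) ^ (p + 1) * v (n + 1) * Real.exp (-((n : ℝ) + 1) * t)))
      = -(Sgen v (p + 1) t) := by
    rw [tsum_neg]; rfl
  rw [htsum] at key
  exact key

/-- The generating function of a (sub-)probability distribution `(v_k)_{k ≥ 1}`: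
`V(x) = ∑_{k≥1} v_k e^(−kx) − 1`. -/
noncomputable def genFun (v : ℕ → ℝ) (x : ℝ) : ℝ :=
  (∑' k : ℕ, v (k + 1) * Real.exp (-((k : ℝ) + 1) * x)) - 1

/-- `E(x) = −V'(x)³ / V''(x)`. -/
noncomputable def EFun (v : ℕ → ℝ) (x : ℝ) : ℝ :=
  -(deriv (genFun v) x) ^ 3 / iteratedDeriv 2 (genFun v) x

lemma genFun_eq_Sgen (v : ℕ → ℝ) : genFun v = fun x => Sgen v 0 x - 1 := by
  funext x
  simp [genFun, Sgen]

lemma hasDerivAt_genFun {v : ℕ → ℝ} (hnn : ∀ k : ℕ, 1 ≤ k → 0 ≤ v k)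
    (hb : ∀ k : ℕ, v (k + 1) ≤ 1) {t : ℝ} (ht : 0 < t) :
    HasDerivAt (genFun v) (-(Sgen v 1 t)) t := by
  rw [genFun_eq_Sgen]
  exact (hasDerivAt_Sgen hnn hb 0 ht).sub_const 1

lemma deriv_genFun {v : ℕ → ℝ} (hnn : ∀ k : ℕ, 1 ≤ k → 0 ≤ v k)
    (hb : ∀ k : ℕ, v (k + 1) ≤ 1) {t : ℝ} (ht : 0 < t) :
    deriv (genFun v) t = -(Sgen v 1 t) :=
  (hasDerivAt_genFun hnn hb ht).deriv

lemma iteratedDeriv_two_genFun {v : ℕ → ℝ} (hnn : ∀ k : ℕ, 1 ≤ k → 0 ≤ v k)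
    (hb : ∀ k : ℕ, v (k + 1) ≤ 1) {t : ℝ} (ht : 0 < t) :
    iteratedDeriv 2 (genFun v) t = Sgen v 2 t := by
  rw [show (2 : ℕ) = 1 + 1 from rfl, iteratedDeriv_succ, iteratedDeriv_one]
  have hev : deriv (genFun v) =ᶠ[𝓝 t] fun z => -(Sgen v 1 z) :=
    eventually_of_mem (isOpen_Ioi.mem_nhds (mem_Ioi.2 ht))
      (fun z hz => deriv_genFun hnn hb (mem_Ioi.1 hz))
  rw [hev.deriv_eq]
  have := ((hasDerivAt_Sgen hnn hb 1 ht).neg).deriv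
  simpa using this

/-- for a probability distribution `(v_k)`, for every `x > 0` we have
`0 < V(x)·V'(x) ≤ E*(x)`, where `E*(x) = sup_{0 < y ≤ x} E(y)` (the upper bound is
expressed as: `V(x)·V'(x)` is dominated by every upper bound `M` of `E` on `(0, x]`,
which is the meaning of `≤ sup` with a possibly infinite supremum). -/
theorem genFun_apriori_bound (v : ℕ → ℝ)
    (hnn : ∀ k : ℕ, 1 ≤ k → 0 ≤ v k)
    (hsum : HasSum (fun k : ℕ => v (k + 1)) 1) :
    ∀ x : ℝ, 0 < x →
      0 < genFun v x * deriv (genFun v) x ∧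
      ∀ M : ℝ, (∀ y ∈ Set.Ioc (0 : ℝ) x, EFun v y ≤ M) →
        genFun v x * deriv (genFun v) x ≤ M := by
  intro x hx
  -- basic facts
  have hb : ∀ k : ℕ, v (k + 1) ≤ 1 :=
    fun k => le_hasSum hsum k (fun j _ => hnn (j + 1) (by omega))
  obtain ⟨j, hj⟩ : ∃ j : ℕ, 0 < v (j + 1) := by
    by_contra h
    push_neg at h
    have hz : ∀ k : ℕ, v (k + 1) = 0 :=
      fun k => le_antisymm (h k) (hnn (k + 1) (by omega))
    have : HasSum (fun k : ℕ => v (k + 1)) 0 := by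
      simpa [funext hz] using hasSum_zero (α := ℝ) (β := ℕ)
    exact one_ne_zero (hsum.unique this)
  have hnnk : ∀ (p : ℕ) (t : ℝ) (k : ℕ),
      0 ≤ ((k : ℝ) + 1) ^ p * v (k + 1) * Real.exp (-((k : ℝ) + 1) * t) := by
    intro p t k
    have := hnn (k + 1) (by omega)
    positivity
  have hS1pos : ∀ t : ℝ, 0 < t → 0 < Sgen v 1 t := by
    intro t ht
    refine Summable.tsum_pos (summable_Sgen hnn hb 1 ht) (hnnk 1 t) j ?_
    have := Real.exp_pos (-((j : ℝ) + 1) * t)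
    positivity
  have hS2pos : ∀ t : ℝ, 0 < t → 0 < Sgen v 2 t := by
    intro t ht
    refine Summable.tsum_pos (summable_Sgen hnn hb 2 ht) (hnnk 2 t) j ?_
    have := Real.exp_pos (-((j : ℝ) + 1) * t)
    positivity
  have hgfneg : ∀ t : ℝ, 0 < t → genFun v t < 0 := by
    intro t ht
    have hsummt : Summable (fun k : ℕ => v (k + 1) * Real.exp (-((k : ℝ) + 1) * t)) := by
      have := summable_Sgen hnn hb 0 ht
      simpa using this
    have hle : ∀ k : ℕ, v (k + 1) * Real.exp (-((k : ℝ) + 1) * t) ≤ v (k + 1) := by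
      intro k
      have hv := hnn (k + 1) (by omega)
      have he : Real.exp (-((k : ℝ) + 1) * t) ≤ 1 := by
        rw [Real.exp_le_one_iff]
        nlinarith [Nat.cast_nonneg (α := ℝ) k]
      nlinarith
    have hstrict : v (j + 1) * Real.exp (-((j : ℝ) + 1) * t) < v (j + 1) := by
      have he : Real.exp (-((j : ℝ) + 1) * t) < 1 := by
        rw [Real.exp_lt_one_iff]
        nlinarith [Nat.cast_nonneg (α := ℝ) j]
      nlinarith
    have hlt := Summable.tsum_lt_tsum hle hstrict hsummt hsum.summable
    rw [hsum.tsum_eq] at hlt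
    simp only [genFun]
    linarith
  have hD : deriv (genFun v) x = -(Sgen v 1 x) := deriv_genFun hnn hb hx
  constructor
  · rw [hD]
    exact mul_pos_of_neg_of_neg (hgfneg x hx) (by linarith [hS1pos x hx])
  · intro M hM
    -- translate the bound on EFun
    have hMy : ∀ y : ℝ, y ∈ Set.Ioc (0 : ℝ) x → (Sgen v 1 y) ^ 3 ≤ M * Sgen v 2 y := by
      intro y hy
      have h1 := hM y hy
      rw [EFun, deriv_genFun hnn hb hy.1, iteratedDeriv_two_genFun hnn hb hy.1] at h1
      have h2 : (Sgen v 1 y) ^ 3 / Sgen v 2 y ≤ M := by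
        calc (Sgen v 1 y) ^ 3 / Sgen v 2 y = -(-(Sgen v 1 y)) ^ 3 / Sgen v 2 y := by ring
          _ ≤ M := h1
      exact (div_le_iff₀ (hS2pos y hy.1)).1 h2
    have hMpos : 0 < M := by
      have h1 := hMy x ⟨hx, le_refl x⟩
      have h2 := hS1pos x hx
      have h3 := hS2pos x hx
      nlinarith [pow_pos h2 3]
    set g : ℝ → ℝ := fun t => M / Sgen v 1 t + genFun v t with hg_def
    have hgderiv : ∀ t : ℝ, 0 < t →
        HasDerivAt g (M * Sgen v 2 t / (Sgen v 1 t) ^ 2 - Sgen v 1 t) t := by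
      intro t ht
      have h1 := hasDerivAt_Sgen hnn hb 1 ht
      have hne : Sgen v 1 t ≠ 0 := ne_of_gt (hS1pos t ht)
      have hdiv := (hasDerivAt_const t M).div h1 hne
      have h2 := hdiv.add (hasDerivAt_genFun hnn hb ht)
      convert h2 using 1
      · rfl
      · rfl
      · rfl
      field_simp
      ring
    have hmono : ∀ y : ℝ, y ∈ Set.Ioc (0:ℝ) x → g y ≤ g x := by
      intro y hy
      have hsub : Set.Icc y x ⊆ Set.Ioi (0:ℝ) := fun t ht => lt_of_lt_of_le hy.1 ht.1
      have hcont : ContinuousOn g (Set.Icc y x) := fun t ht =>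
        ((hgderiv t (hsub ht)).continuousAt).continuousWithinAt
      have hdiff : DifferentiableOn ℝ g (interior (Set.Icc y x)) := by
        intro t ht
        rw [interior_Icc] at ht
        exact ((hgderiv t (lt_trans hy.1 ht.1)).differentiableAt).differentiableWithinAt
      have hnon : ∀ t ∈ interior (Set.Icc y x), 0 ≤ deriv g t := by
        intro t ht
        rw [interior_Icc] at ht
        have ht0 : 0 < t := lt_trans hy.1 ht.1
        have htx : t ∈ Set.Ioc (0:ℝ) x := ⟨ht0, le_of_lt ht.2⟩
        rw [(hgderiv t ht0).deriv]
        have hE := hMy t htx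
        have h1 := hS1pos t ht0
        have h2 : Sgen v 1 t ≤ M * Sgen v 2 t / (Sgen v 1 t) ^ 2 := by
          rw [le_div_iff₀ (by positivity)]
          nlinarith
        linarith
      exact monotoneOn_of_deriv_nonneg (convex_Icc y x) hcont hdiff hnon
        (Set.left_mem_Icc.2 hy.2) (Set.right_mem_Icc.2 hy.2) hy.2
    have hlow : ∀ y : ℝ, y ∈ Set.Ioc (0:ℝ) x → genFun v y ≤ g x := by
      intro y hy
      have h1 := hS1pos y hy.1
      have h2 : 0 ≤ M / Sgen v 1 y := le_of_lt (div_pos hMpos h1)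
      have h3 : genFun v y ≤ g y := by
        simp only [hg_def]
        linarith
      exact h3.trans (hmono y hy)
    have hgx0 : 0 ≤ g x := by
      have hn : ∀ n : ℕ, (∑ k ∈ Finset.range n, v (k + 1)) - 1 ≤ g x := by
        intro n
        have hc : Continuous (fun y : ℝ => (∑ k ∈ Finset.range n,
            v (k + 1) * Real.exp (-((k : ℝ) + 1) * y)) - 1) := by
          apply Continuous.sub _ continuous_const
          apply continuous_finset_sum
          intro k _
          exact Continuous.mul continuous_const
            ((continuous_const.mul continuous_id).rexp)
        have hcont : Tendsto (fun y : ℝ => (∑ k ∈ Finset.range n,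
            v (k + 1) * Real.exp (-((k : ℝ) + 1) * y)) - 1) (𝓝[>] (0:ℝ))
            (𝓝 ((∑ k ∈ Finset.range n, v (k + 1)) - 1)) := by
          have h4 := (hc.tendsto 0).mono_left (nhdsWithin_le_nhds (s := Set.Ioi (0:ℝ)))
          simpa using h4
        refine le_of_tendsto hcont ?_
        filter_upwards [Ioc_mem_nhdsGT hx] with y hy
        have hpart : (∑ k ∈ Finset.range n, v (k + 1) * Real.exp (-((k : ℝ) + 1) * y))
            ≤ ∑' k : ℕ, v (k + 1) * Real.exp (-((k : ℝ) + 1) * y) := by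
          refine Summable.sum_le_tsum (Finset.range n) (fun k _ => ?_) ?_
          · have := hnn (k + 1) (by omega)
            positivity
          · have := summable_Sgen hnn hb 0 hy.1
            simpa using this
        have heq : genFun v y
            = (∑' k : ℕ, v (k + 1) * Real.exp (-((k : ℝ) + 1) * y)) - 1 := rfl
        have h2 := hlow y hy
        rw [heq] at h2
        linarith
      have htend : Tendsto (fun n : ℕ => (∑ k ∈ Finset.range n, v (k + 1)) - 1)
          atTop (𝓝 0) := by
        have h4 := hsum.tendsto_sum_nat.sub (tendsto_const_nhds (x := (1:ℝ)))
        simpa using h4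
      exact le_of_tendsto htend (Filter.Eventually.of_forall hn)
    have h1 := hS1pos x hx
    simp only [hg_def] at hgx0
    have h2 : -genFun v x ≤ M / Sgen v 1 x := by linarith
    have h3 : (-genFun v x) * Sgen v 1 x ≤ M := (le_div_iff₀ h1).1 h2
    rw [hD]
    calc genFun v x * -(Sgen v 1 x) = (-genFun v x) * Sgen v 1 x := by ring
      _ ≤ M := h3
end

section
/- Let v = (v_k)_{k≥1} be nonnegative reals with Σ_{k=1}^∞ v_k = 1, let V(x) := Σ_{k=1}^∞ v_k e^{−kx} − 1, and assume lim_{x→0⁺} V'(x) = −∞. Then for every x > 0, with E*(x) := sup_{0<y≤x} E(y) and E_*(x) := inf_{0<y≤x} E(y) assumed finite and positive respectively: (i) √2·E_*(x)^{1/2}·x^{1/2} ≤ −V(x) ≤ √2·E*(x)^{1/2}·x^{1/2}; (ii) 2^{−1/2}·E_*(x)·E*(x)^{−1/2}·x^{−1/2} ≤ −V'(x) ≤ 2^{−1/2}·E*(x)·E_*(x)^{−1/2}·x^{−1/2}; (iii) 2^{−3/2}·E_*(x)³·E*(x)^{−5/2}·x^{−3/2} ≤ V''(x) ≤ 2^{−3/2}·E*(x)³·E_*(x)^{−5/2}·x^{−3/2};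 (iv) E_*(x) ≤ V(x)·V'(x) ≤ E*(x). -/
open Real Filter Set

namespace GFA

noncomputable def trm (v : ℕ → ℝ) (m : ℕ) (k : ℕ) (x : ℝ) : ℝ :=
  ((k:ℝ)+1)^m * v (k+1) * Real.exp (-((k : ℝ) + 1) * x)

noncomputable def S (v : ℕ → ℝ) (m : ℕ) (x : ℝ) : ℝ := ∑' k, trm v m k x

variable {v : ℕ → ℝ} (hnn : ∀ k : ℕ, 1 ≤ k → 0 ≤ v k)
  (hsum : HasSum (fun k : ℕ => v (k + 1)) 1)

theorem summable_aux (m : ℕ) {c : ℝ} (hc : 0 < c) :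
    Summable (fun k : ℕ => ((k:ℝ)+1)^m * Real.exp (-((k : ℝ) + 1) * c)) := by
  have hsum : Summable (fun n : ℕ => (n:ℝ)^m * (Real.exp (-c))^n) := by
    apply summable_pow_mul_geometric_of_norm_lt_one
    rw [Real.norm_eq_abs, abs_of_pos (Real.exp_pos _)]
    exact Real.exp_lt_one_iff.2 (by linarith)
  have h2 : Summable ((fun n : ℕ => (n:ℝ)^m * (Real.exp (-c))^n) ∘ (fun k => k + 1)) :=
    hsum.comp_injective (add_left_injective 1)
  apply h2.congr
  intro k
  simp only [Function.comp]
  have : (Real.exp (-c))^(k+1) = Real.exp (-((k : ℝ) + 1) * c) := by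
    rw [← Real.exp_nat_mul]; push_cast; ring_nf
  push_cast [this]
  ring

include hnn hsum

theorem v_le_one (k : ℕ) : v (k+1) ≤ 1 :=
  le_hasSum hsum k (fun j _ => hnn (j+1) (by omega))

theorem trm_nonneg (m k : ℕ) (x : ℝ) : 0 ≤ trm v m k x := by
  have := hnn (k+1) (by omega)
  unfold trm
  positivity

theorem trm_le (m k : ℕ) {c x : ℝ} (hcx : c ≤ x) :
    trm v m k x ≤ ((k:ℝ)+1)^m * Real.exp (-((k : ℝ) + 1) * c) := by
  have h1 := hnn (k+1) (by omega)
  have h2 := v_le_one hnn hsum k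
  have h3 : Real.exp (-((k : ℝ) + 1) * x) ≤ Real.exp (-((k : ℝ) + 1) * c) := by
    apply Real.exp_le_exp.2
    have : (0:ℝ) ≤ (k:ℝ) + 1 := by positivity
    nlinarith
  calc ((k:ℝ)+1)^m * v (k+1) * Real.exp (-((k : ℝ) + 1) * x)
      ≤ ((k:ℝ)+1)^m * 1 * Real.exp (-((k : ℝ) + 1) * c) := by
        apply mul_le_mul _ h3 (le_of_lt (Real.exp_pos _)) (by positivity)
        nlinarith [pow_pos (show (0:ℝ) < (k:ℝ)+1 by positivity) m]
    _ = ((k:ℝ)+1)^m * Real.exp (-((k : ℝ) + 1) * c) := by ring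

theorem summable_trm (m : ℕ) {x : ℝ} (hx : 0 < x) : Summable (fun k => trm v m k x) :=
  (summable_aux m hx).of_nonneg_of_le (trm_nonneg hnn hsum m · x)
    (fun k => trm_le hnn hsum m k le_rfl)

theorem S_nonneg (m : ℕ) (x : ℝ) : 0 ≤ S v m x :=
  tsum_nonneg (trm_nonneg hnn hsum m · x)

theorem hasDerivAt_S (m : ℕ) {x : ℝ} (hx : 0 < x) :
    HasDerivAt (S v m) (-(S v (m+1) x)) x := by
  have hx2 : 0 < x/2 := by linarith
  have key : HasDerivAt (fun z => ∑' k, trm v m k z) (∑' k, -(trm v (m+1) k x)) x := by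
    apply hasDerivAt_tsum_of_isPreconnected (summable_aux (m+1) hx2) isOpen_Ioi
      (isPreconnected_Ioi) (g := fun (k : ℕ) (z : ℝ) => trm v m k z)
      (g' := fun (k : ℕ) (z : ℝ) => -(trm v (m+1) k z))
      (u := fun (k : ℕ) => ((k:ℝ)+1)^(m+1) * Real.exp (-((k : ℝ) + 1) * (x/2)))
      (y₀ := x) (y := x)
    · intro k y _
      have hexp : HasDerivAt (fun z : ℝ => Real.exp (-((k : ℝ) + 1) * z))
          (Real.exp (-((k : ℝ) + 1) * y) * (-((k : ℝ) + 1))) y := by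
        simpa using ((hasDerivAt_id y).const_mul (-((k : ℝ) + 1))).exp
      have h2 := hexp.const_mul (((k:ℝ)+1)^m * v (k+1))
      have heq : (fun z => trm v m k z)
          = fun z => ((k:ℝ)+1)^m * v (k+1) * Real.exp (-((k : ℝ) + 1) * z) := rfl
      rw [heq]
      refine h2.congr_deriv ?_
      simp only [trm, pow_succ]
      ring
    · intro k y hy
      rw [Real.norm_eq_abs, abs_neg, abs_of_nonneg (trm_nonneg hnn hsum (m+1) k y)]
      exact trm_le hnn hsum (m+1) k (le_of_lt hy)
    · exact mem_Ioi.2 (by linarith)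
    · exact summable_trm hnn hsum m hx
    · exact mem_Ioi.2 (by linarith)
  have : (∑' k, -(trm v (m+1) k x)) = -(S v (m+1) x) := by
    rw [tsum_neg]; rfl
  rw [this] at key
  exact key

theorem hasDerivAt_genFun {x : ℝ} (hx : 0 < x) :
    HasDerivAt (genFun v) (-(S v 1 x)) x := by
  have : genFun v = fun z => S v 0 z - 1 := by
    funext z; simp [genFun, S, trm]
  rw [this]
  simpa using (hasDerivAt_S hnn hsum 0 hx).sub_const 1

theorem deriv_genFun {x : ℝ} (hx : 0 < x) : deriv (genFun v) x = -(S v 1 x) :=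
  (hasDerivAt_genFun hnn hsum hx).deriv

theorem iteratedDeriv_two {x : ℝ} (hx : 0 < x) :
    iteratedDeriv 2 (genFun v) x = S v 2 x := by
  rw [iteratedDeriv_succ, iteratedDeriv_one]
  have hev : deriv (genFun v) =ᶠ[nhds x] (fun z => -(S v 1 z)) := by
    filter_upwards [Ioi_mem_nhds hx] with z hz
    exact deriv_genFun hnn hsum hz
  rw [hev.deriv_eq]
  have := ((hasDerivAt_S hnn hsum 1 hx).neg).deriv
  simpa using this

theorem EFun_eq {x : ℝ} (hx : 0 < x) : EFun v x = (S v 1 x)^3 / S v 2 x := by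
  rw [EFun, deriv_genFun hnn hsum hx, iteratedDeriv_two hnn hsum hx]
  ring_nf

theorem S_pos {x Einf : ℝ} (hx : 0 < x) (hEinf : 0 < Einf) (hE : Einf ≤ EFun v x) :
    0 < S v 1 x ∧ 0 < S v 2 x := by
  have hEpos : 0 < EFun v x := lt_of_lt_of_le hEinf hE
  rw [EFun_eq hnn hsum hx] at hEpos
  have h2 : S v 2 x ≠ 0 := by
    intro h; rw [h, div_zero] at hEpos; exact lt_irrefl 0 hEpos
  have h2' : 0 < S v 2 x := lt_of_le_of_ne (S_nonneg hnn hsum 2 x) (Ne.symm h2)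
  refine ⟨?_, h2'⟩
  have h13 : 0 < (S v 1 x)^3 := by
    have := mul_pos hEpos h2'
    rwa [div_mul_cancel₀ _ h2] at this
  have h1 : 0 ≤ S v 1 x := S_nonneg hnn hsum 1 x
  rcases h1.lt_or_eq with h | h
  · exact h
  · exfalso; rw [← h] at h13; simp at h13

theorem tendsto_genFun_zero :
    Tendsto (genFun v) (nhdsWithin 0 (Set.Ioi 0)) (nhds 0) := by
  have h : Tendsto (fun x => ∑' k, trm v 0 k x) (nhdsWithin 0 (Set.Ioi 0))
      (nhds (∑' k, v (k+1))) := by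
    apply tendsto_tsum_of_dominated_convergence (bound := fun k => v (k+1)) hsum.summable
    · intro k
      have hc : Continuous (fun x : ℝ => trm v 0 k x) := by
        unfold trm; continuity
      have h2 : Tendsto (fun x : ℝ => trm v 0 k x) (nhdsWithin 0 (Set.Ioi 0))
          (nhds (trm v 0 k 0)) := (hc.tendsto 0).mono_left nhdsWithin_le_nhds
      simpa [trm] using h2
    · filter_upwards [self_mem_nhdsWithin] with y hy k
      rw [Real.norm_eq_abs, abs_of_nonneg (trm_nonneg hnn hsum 0 k y)]
      calc trm v 0 k y = v (k+1) * Real.exp (-((k:ℝ)+1)*y) := by simp [trm]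
        _ ≤ v (k+1) * 1 := by
            apply mul_le_mul_of_nonneg_left _ (hnn (k+1) (by omega))
            rw [Real.exp_le_one_iff]
            have : (0:ℝ) < (k:ℝ)+1 := by positivity
            rw [Set.mem_Ioi] at hy
            nlinarith
        _ = v (k+1) := mul_one _
  have hg : genFun v = fun z => S v 0 z - 1 := by funext z; simp [genFun, S, trm]
  rw [hg]
  have h2 : Tendsto (fun z => S v 0 z - 1) (nhdsWithin 0 (Set.Ioi 0)) (nhds ((∑' k, v (k+1)) - 1)) :=
    h.sub_const 1
  rw [hsum.tsum_eq] at h2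
  simpa using h2


theorem tendsto_S1_atTop
    (hderiv : Tendsto (deriv (genFun v)) (nhdsWithin 0 (Set.Ioi 0)) atBot) :
    Tendsto (S v 1) (nhdsWithin 0 (Set.Ioi 0)) atTop := by
  have hev : (fun a => -(S v 1 a)) =ᶠ[nhdsWithin 0 (Set.Ioi 0)] deriv (genFun v) := by
    filter_upwards [self_mem_nhdsWithin] with a ha
    exact (deriv_genFun hnn hsum ha).symm
  have h1 : Tendsto (fun a => -(S v 1 a)) (nhdsWithin 0 (Set.Ioi 0)) atBot :=
    hderiv.congr' hev.symm
  exact tendsto_neg_atBot_iff.mp h1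

/-- The key bound coming from `(1/W²)' = 2/E` and `W(0⁺)=∞`. -/
theorem inv_sq_bound {x Einf Estar : ℝ} (hx : 0 < x) (hEinf : 0 < Einf)
    (hlow : ∀ y ∈ Set.Ioc 0 x, Einf ≤ EFun v y)
    (hup : ∀ y ∈ Set.Ioc 0 x, EFun v y ≤ Estar)
    (hderiv : Tendsto (deriv (genFun v)) (nhdsWithin 0 (Set.Ioi 0)) atBot) :
    2*x/Estar ≤ ((S v 1 x)^2)⁻¹ ∧ ((S v 1 x)^2)⁻¹ ≤ 2*x/Einf := by
  have hEstar : 0 < Estar := lt_of_lt_of_le hEinf ((hlow x ⟨hx, le_rfl⟩).trans (hup x ⟨hx, le_rfl⟩))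
  have pos : ∀ y ∈ Set.Ioc 0 x, 0 < S v 1 y ∧ 0 < S v 2 y :=
    fun y hy => S_pos hnn hsum hy.1 hEinf (hlow y hy)
  have hEpos : ∀ y ∈ Set.Ioc 0 x, 0 < EFun v y :=
    fun y hy => lt_of_lt_of_le hEinf (hlow y hy)
  set G : ℝ → ℝ := fun z => ((S v 1 z)^2)⁻¹ with hG
  have Gd : ∀ y ∈ Set.Ioc 0 x, HasDerivAt G (2 / EFun v y) y := by
    intro y hy
    obtain ⟨h1, h2⟩ := pos y hy
    have hd : HasDerivAt (fun z => (S v 1 z)^2) (2 * S v 1 y ^ 1 * (-(S v 2 y))) y :=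
      (hasDerivAt_S hnn hsum 1 hy.1).pow 2
    have hne : (S v 1 y)^2 ≠ 0 := by positivity
    have := hd.inv hne
    refine this.congr_deriv ?_
    rw [EFun_eq hnn hsum hy.1]
    field_simp
  have step : ∀ a ∈ Set.Ioo 0 x,
      2*(x-a)/Estar ≤ G x - G a ∧ G x - G a ≤ 2*(x-a)/Einf := by
    intro a ha
    have hax : a < x := ha.2
    have hcont : ContinuousOn G (Set.Icc a x) := by
      intro y hy
      exact (Gd y ⟨lt_of_lt_of_le ha.1 hy.1, hy.2⟩).continuousAt.continuousWithinAt
    obtain ⟨c, hc, hceq⟩ := exists_hasDerivAt_eq_slope G (fun y => 2 / EFun v y) hax hcont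
      (fun y hy => Gd y ⟨lt_trans ha.1 hy.1, le_of_lt hy.2⟩)
    have hcmem : c ∈ Set.Ioc 0 x := ⟨lt_trans ha.1 hc.1, le_of_lt hc.2⟩
    have hEc : 0 < EFun v c := hEpos c hcmem
    have hb1 : 2/Estar ≤ 2 / EFun v c := by
      apply div_le_div_of_nonneg_left (by norm_num) hEc (hup c hcmem)
    have hb2 : 2 / EFun v c ≤ 2/Einf := by
      apply div_le_div_of_nonneg_left (by norm_num) hEinf (hlow c hcmem)
    have hne : x - a ≠ 0 := by linarith
    have hslope : G x - G a = (2 / EFun v c) * (x - a) := by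
      rw [hceq, div_mul_cancel₀ _ hne]
    constructor
    · rw [hslope]
      calc 2*(x-a)/Estar = (2/Estar) * (x-a) := by ring
        _ ≤ (2 / EFun v c) * (x-a) := mul_le_mul_of_nonneg_right hb1 (by linarith)
    · rw [hslope]
      calc (2 / EFun v c) * (x-a) ≤ (2/Einf) * (x-a) :=
            mul_le_mul_of_nonneg_right hb2 (by linarith)
        _ = 2*(x-a)/Einf := by ring
  -- limits as a → 0⁺
  have hGa : Tendsto G (nhdsWithin 0 (Set.Ioi 0)) (nhds 0) := by
    have h1 : Tendsto (fun a => (S v 1 a)^2) (nhdsWithin 0 (Set.Ioi 0)) atTop :=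
      (tendsto_pow_atTop (n := 2) (by norm_num)).comp (tendsto_S1_atTop hnn hsum hderiv)
    exact h1.inv_tendsto_atTop
  have hmem : Set.Ioo 0 x ∈ nhdsWithin (0:ℝ) (Set.Ioi 0) :=
    Ioo_mem_nhdsGT_of_mem ⟨le_rfl, hx⟩
  have hGd : Tendsto (fun a => G x - G a) (nhdsWithin 0 (Set.Ioi 0)) (nhds (G x)) := by
    simpa using (tendsto_const_nhds (x := G x)).sub hGa
  constructor
  · have hL : Tendsto (fun a : ℝ => 2*(x-a)/Estar) (nhdsWithin 0 (Set.Ioi 0))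
        (nhds (2*x/Estar)) := by
      have : Tendsto (fun a : ℝ => 2*(x-a)/Estar) (nhds 0) (nhds (2*(x-0)/Estar)) := by
        apply Continuous.tendsto
        continuity
      simpa using this.mono_left nhdsWithin_le_nhds
    exact le_of_tendsto_of_tendsto hL hGd
      (by filter_upwards [hmem] with a ha; exact (step a ha).1)
  · have hL : Tendsto (fun a : ℝ => 2*(x-a)/Einf) (nhdsWithin 0 (Set.Ioi 0))
        (nhds (2*x/Einf)) := by
      have : Tendsto (fun a : ℝ => 2*(x-a)/Einf) (nhds 0) (nhds (2*(x-0)/Einf)) := by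
        apply Continuous.tendsto
        continuity
      simpa using this.mono_left nhdsWithin_le_nhds
    exact le_of_tendsto_of_tendsto hGd hL
      (by filter_upwards [hmem] with a ha; exact (step a ha).2)

omit hnn hsum in
theorem sqrt_div_id {a t : ℝ} (ha : 0 < a) (ht : 0 < t) :
    a / Real.sqrt (2*a*t) = Real.sqrt (a/(2*t)) := by
  have h0 : Real.sqrt a ≠ 0 := ne_of_gt (Real.sqrt_pos.2 ha)
  have h1 : 2*a*t = a*(2*t) := by ring
  rw [h1]
  calc a / Real.sqrt (a*(2*t)) = (Real.sqrt a * Real.sqrt a) / (Real.sqrt a * Real.sqrt (2*t)) := by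
        rw [Real.sqrt_mul ha.le, Real.mul_self_sqrt ha.le]
    _ = Real.sqrt a / Real.sqrt (2*t) := mul_div_mul_left _ _ h0
    _ = Real.sqrt (a/(2*t)) := (Real.sqrt_div ha.le _).symm

theorem W_bound {x Einf Estar : ℝ} (hx : 0 < x) (hEinf : 0 < Einf)
    (hlow : ∀ y ∈ Set.Ioc 0 x, Einf ≤ EFun v y)
    (hup : ∀ y ∈ Set.Ioc 0 x, EFun v y ≤ Estar)
    (hderiv : Tendsto (deriv (genFun v)) (nhdsWithin 0 (Set.Ioi 0)) atBot) :
    Real.sqrt (Einf/(2*x)) ≤ S v 1 x ∧ S v 1 x ≤ Real.sqrt (Estar/(2*x)) := by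
  have hEstar : 0 < Estar := lt_of_lt_of_le hEinf ((hlow x ⟨hx, le_rfl⟩).trans (hup x ⟨hx, le_rfl⟩))
  obtain ⟨hA, hB⟩ := inv_sq_bound hnn hsum hx hEinf hlow hup hderiv
  have h1 : 0 < S v 1 x := (S_pos hnn hsum hx hEinf (hlow x ⟨hx, le_rfl⟩)).1
  have hsq : 0 < (S v 1 x)^2 := by positivity
  have h2x : 0 < 2*x := by linarith
  constructor
  · have hkey : Einf/(2*x) ≤ (S v 1 x)^2 := by
      have hi := inv_anti₀ (by positivity) hB
      rwa [inv_inv, inv_div] at hi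
    calc Real.sqrt (Einf/(2*x)) ≤ Real.sqrt ((S v 1 x)^2) := Real.sqrt_le_sqrt hkey
      _ = S v 1 x := Real.sqrt_sq h1.le
  · have hkey : (S v 1 x)^2 ≤ Estar/(2*x) := by
      have hi := inv_anti₀ (by positivity) hA
      rwa [inv_inv, inv_div] at hi
    calc S v 1 x = Real.sqrt ((S v 1 x)^2) := (Real.sqrt_sq h1.le).symm
      _ ≤ Real.sqrt (Estar/(2*x)) := Real.sqrt_le_sqrt hkey

theorem neg_genFun_bound {x Einf Estar : ℝ} (hx : 0 < x) (hEinf : 0 < Einf)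
    (hlow : ∀ y ∈ Set.Ioc 0 x, Einf ≤ EFun v y)
    (hup : ∀ y ∈ Set.Ioc 0 x, EFun v y ≤ Estar)
    (hderiv : Tendsto (deriv (genFun v)) (nhdsWithin 0 (Set.Ioi 0)) atBot) :
    Real.sqrt (2*Einf*x) ≤ -genFun v x ∧ -genFun v x ≤ Real.sqrt (2*Estar*x) := by
  have hEstar : 0 < Estar := lt_of_lt_of_le hEinf ((hlow x ⟨hx, le_rfl⟩).trans (hup x ⟨hx, le_rfl⟩))
  have Wb : ∀ t, t ∈ Set.Ioc 0 x →
      Real.sqrt (Einf/(2*t)) ≤ S v 1 t ∧ S v 1 t ≤ Real.sqrt (Estar/(2*t)) := by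
    intro t ht
    exact W_bound hnn hsum ht.1 hEinf
      (fun y hy => hlow y ⟨hy.1, hy.2.trans ht.2⟩)
      (fun y hy => hup y ⟨hy.1, hy.2.trans ht.2⟩) hderiv
  -- derivative of z ↦ √(2*a*z)
  have sqrtDeriv : ∀ (a : ℝ), 0 < a → ∀ y : ℝ, 0 < y →
      HasDerivAt (fun z => Real.sqrt (2*a*z)) (Real.sqrt (a/(2*y))) y := by
    intro a ha y hy
    have hne : 2*a*y ≠ 0 := by positivity
    have h1 : HasDerivAt (fun z : ℝ => 2*a*z) (2*a) y := by
      simpa using (hasDerivAt_id y).const_mul (2*a)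
    have h2 := (Real.hasDerivAt_sqrt hne).comp y h1
    have h3 : 1 / (2 * Real.sqrt (2*a*y)) * (2*a) = Real.sqrt (a/(2*y)) := by
      rw [← sqrt_div_id ha hy]
      have hs : Real.sqrt (2*a*y) ≠ 0 := ne_of_gt (Real.sqrt_pos.2 (by positivity))
      field_simp
    rw [h3] at h2
    exact h2
  have hmem : Set.Ioo 0 x ∈ nhdsWithin (0:ℝ) (Set.Ioi 0) :=
    Ioo_mem_nhdsGT_of_mem ⟨le_rfl, hx⟩
  constructor
  · -- lower bound
    set L : ℝ → ℝ := fun z => -genFun v z - Real.sqrt (2*Einf*z) with hL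
    have Ld : ∀ y ∈ Set.Ioc 0 x,
        HasDerivAt L (S v 1 y - Real.sqrt (Einf/(2*y))) y := by
      intro y hy
      have := ((hasDerivAt_genFun hnn hsum hy.1).neg).sub (sqrtDeriv Einf hEinf y hy.1)
      exact this.congr_deriv (by ring)
    have Lmono : ∀ a ∈ Set.Ioo 0 x, L a ≤ L x := by
      intro a ha
      have hcont : ContinuousOn L (Set.Icc a x) := fun y hy =>
        (Ld y ⟨lt_of_lt_of_le ha.1 hy.1, hy.2⟩).continuousAt.continuousWithinAt
      obtain ⟨c, hc, hceq⟩ := exists_hasDerivAt_eq_slope L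
        (fun y => S v 1 y - Real.sqrt (Einf/(2*y))) ha.2 hcont
        (fun y hy => Ld y ⟨lt_trans ha.1 hy.1, le_of_lt hy.2⟩)
      have hcmem : c ∈ Set.Ioc 0 x := ⟨lt_trans ha.1 hc.1, le_of_lt hc.2⟩
      have hnonneg : 0 ≤ S v 1 c - Real.sqrt (Einf/(2*c)) :=
        sub_nonneg.2 (Wb c hcmem).1
      rw [hceq] at hnonneg
      have hpos : 0 < x - a := by linarith [ha.2]
      have h2 := (le_div_iff₀ hpos).mp hnonneg
      linarith
    have hLlim : Tendsto L (nhdsWithin 0 (Set.Ioi 0)) (nhds 0) := by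
      have h1 : Tendsto (fun a : ℝ => Real.sqrt (2*Einf*a)) (nhdsWithin 0 (Set.Ioi 0))
          (nhds 0) := by
        have hc : Continuous (fun a : ℝ => Real.sqrt (2*Einf*a)) :=
          Real.continuous_sqrt.comp (continuous_const.mul continuous_id)
        have h2 : Tendsto (fun a : ℝ => Real.sqrt (2*Einf*a)) (nhdsWithin 0 (Set.Ioi 0))
            (nhds (Real.sqrt (2*Einf*0))) := (hc.tendsto 0).mono_left nhdsWithin_le_nhds
        simpa using h2
      have := ((tendsto_genFun_zero hnn hsum).neg).sub h1
      simpa using this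
    have : 0 ≤ L x := le_of_tendsto hLlim
      (by filter_upwards [hmem] with a ha; exact Lmono a ha)
    simpa [hL] using this
  · -- upper bound
    set U : ℝ → ℝ := fun z => Real.sqrt (2*Estar*z) + genFun v z with hU
    have Ud : ∀ y ∈ Set.Ioc 0 x,
        HasDerivAt U (Real.sqrt (Estar/(2*y)) - S v 1 y) y := by
      intro y hy
      have := (sqrtDeriv Estar hEstar y hy.1).add (hasDerivAt_genFun hnn hsum hy.1)
      exact this.congr_deriv (by ring)
    have Umono : ∀ a ∈ Set.Ioo 0 x, U a ≤ U x := by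
      intro a ha
      have hcont : ContinuousOn U (Set.Icc a x) := fun y hy =>
        (Ud y ⟨lt_of_lt_of_le ha.1 hy.1, hy.2⟩).continuousAt.continuousWithinAt
      obtain ⟨c, hc, hceq⟩ := exists_hasDerivAt_eq_slope U
        (fun y => Real.sqrt (Estar/(2*y)) - S v 1 y) ha.2 hcont
        (fun y hy => Ud y ⟨lt_trans ha.1 hy.1, le_of_lt hy.2⟩)
      have hcmem : c ∈ Set.Ioc 0 x := ⟨lt_trans ha.1 hc.1, le_of_lt hc.2⟩
      have hnonneg : 0 ≤ Real.sqrt (Estar/(2*c)) - S v 1 c :=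
        sub_nonneg.2 (Wb c hcmem).2
      rw [hceq] at hnonneg
      have hpos : 0 < x - a := by linarith [ha.2]
      have h2 := (le_div_iff₀ hpos).mp hnonneg
      linarith
    have hUlim : Tendsto U (nhdsWithin 0 (Set.Ioi 0)) (nhds 0) := by
      have h1 : Tendsto (fun a : ℝ => Real.sqrt (2*Estar*a)) (nhdsWithin 0 (Set.Ioi 0))
          (nhds 0) := by
        have hc : Continuous (fun a : ℝ => Real.sqrt (2*Estar*a)) :=
          Real.continuous_sqrt.comp (continuous_const.mul continuous_id)
        have h2 : Tendsto (fun a : ℝ => Real.sqrt (2*Estar*a)) (nhdsWithin 0 (Set.Ioi 0))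
            (nhds (Real.sqrt (2*Estar*0))) := (hc.tendsto 0).mono_left nhdsWithin_le_nhds
        simpa using h2
      have := h1.add (tendsto_genFun_zero hnn hsum)
      simpa using this
    have : 0 ≤ U x := le_of_tendsto hUlim
      (by filter_upwards [hmem] with a ha; exact Umono a ha)
    simp only [hU] at this
    linarith

omit hnn hsum in
theorem rpow_half {a : ℝ} (ha : 0 < a) : a ^ ((1:ℝ)/2) = Real.sqrt a :=
  (Real.sqrt_eq_rpow a).symm

omit hnn hsum in
theorem rpow_three_half {a : ℝ} (ha : 0 < a) : a ^ ((3:ℝ)/2) = (Real.sqrt a)^3 := by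
  rw [Real.sqrt_eq_rpow, ← Real.rpow_natCast (a ^ ((1:ℝ)/2)) 3, ← Real.rpow_mul ha.le]
  norm_num

omit hnn hsum in
theorem rpow_five_half {a : ℝ} (ha : 0 < a) : a ^ ((5:ℝ)/2) = (Real.sqrt a)^5 := by
  rw [Real.sqrt_eq_rpow, ← Real.rpow_natCast (a ^ ((1:ℝ)/2)) 5, ← Real.rpow_mul ha.le]
  norm_num

omit hnn hsum in
theorem rpow_neg_half {a : ℝ} (ha : 0 < a) : a ^ (-(1:ℝ)/2) = (Real.sqrt a)⁻¹ := by
  rw [show -(1:ℝ)/2 = -((1:ℝ)/2) by norm_num, Real.rpow_neg ha.le, rpow_half ha]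

omit hnn hsum in
theorem rpow_neg_three_half {a : ℝ} (ha : 0 < a) : a ^ (-(3:ℝ)/2) = ((Real.sqrt a)^3)⁻¹ := by
  rw [show -(3:ℝ)/2 = -((3:ℝ)/2) by norm_num, Real.rpow_neg ha.le, rpow_three_half ha]

omit hnn hsum in
theorem rpow_neg_five_half {a : ℝ} (ha : 0 < a) : a ^ (-(5:ℝ)/2) = ((Real.sqrt a)^5)⁻¹ := by
  rw [show -(5:ℝ)/2 = -((5:ℝ)/2) by norm_num, Real.rpow_neg ha.le, rpow_five_half ha]

omit hnn hsum in
theorem alg2L {A B X T E : ℝ} (hA : 0 < A) (hB : 0 < B) (hX : 0 < X) (hT : 0 < T)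
    (hAB : A ≤ B) (h2 : A^2 = E) : T⁻¹ * E * B⁻¹ * X⁻¹ ≤ A / (T * X) := by
  subst h2; field_simp
  nlinarith [mul_nonneg (mul_nonneg (mul_nonneg hT.le hX.le) hA.le) (sub_nonneg.2 hAB)]
omit hnn hsum in
theorem alg2U {A B X T F : ℝ} (hA : 0 < A) (hB : 0 < B) (hX : 0 < X) (hT : 0 < T)
    (hAB : A ≤ B) (h2 : B^2 = F) : B / (T * X) ≤ T⁻¹ * F * A⁻¹ * X⁻¹ := by
  subst h2; field_simp
  nlinarith [mul_nonneg (mul_nonneg (mul_nonneg hT.le hX.le) hB.le) (sub_nonneg.2 hAB)]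
omit hnn hsum in
theorem alg3L {A B X T E F : ℝ} (hA : 0 < A) (hB : 0 < B) (hX : 0 < X) (hT : 0 < T)
    (hAB : A ≤ B) (h2 : A^2 = E) (h3 : B^2 = F) :
    (T^3)⁻¹ * E^3 * (B^5)⁻¹ * (X^3)⁻¹ ≤ (A/(T*X))^3 / F := by
  subst h2; subst h3; field_simp
  have key : A^3 ≤ B^3 := pow_le_pow_left₀ hA.le hAB 3
  have hP : (0:ℝ) < T^3*X^3*A^3*B^2 := by positivity
  nlinarith [mul_le_mul_of_nonneg_left key hP.le]
omit hnn hsum in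
theorem alg3U {A B X T E F : ℝ} (hA : 0 < A) (hB : 0 < B) (hX : 0 < X) (hT : 0 < T)
    (hAB : A ≤ B) (h2 : A^2 = E) (h3 : B^2 = F) :
    (B/(T*X))^3 / E ≤ (T^3)⁻¹ * F^3 * (A^5)⁻¹ * (X^3)⁻¹ := by
  subst h2; subst h3; field_simp
  have key : A^3 ≤ B^3 := pow_le_pow_left₀ hA.le hAB 3
  have hP : (0:ℝ) < T^3*X^3*B^3*A^2 := by positivity
  nlinarith [mul_le_mul_of_nonneg_left key hP.le]
omit hnn hsum in
theorem alg4 {A X T E : ℝ} (hA : 0 < A) (hX : 0 < X) (hT : 0 < T) (h2 : A^2 = E) :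
    E = (T*A*X) * (A/(T*X)) := by
  subst h2; field_simp


end GFA

/-- two-sided bounds on `V`, `V'`, `V''` and `V·V'` in terms of
`E*(x) = sup_{0<y≤x} E(y)` (assumed finite, i.e. a least upper bound exists) and
`E_*(x) = inf_{0<y≤x} E(y)` (assumed positive), under the assumption
`V'(0⁺) = −∞`. -/
theorem genFun_calculus_bounds (v : ℕ → ℝ)
    (hnn : ∀ k : ℕ, 1 ≤ k → 0 ≤ v k)
    (hsum : HasSum (fun k : ℕ => v (k + 1)) 1)
    (hderiv : Filter.Tendsto (deriv (genFun v)) (nhdsWithin 0 (Set.Ioi 0)) Filter.atBot) :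
    ∀ x : ℝ, 0 < x → ∀ Estar Einf : ℝ,
      IsLUB (EFun v '' Set.Ioc 0 x) Estar →
      IsGLB (EFun v '' Set.Ioc 0 x) Einf →
      0 < Einf →
      ((2 : ℝ) ^ ((1:ℝ)/2) * Einf ^ ((1:ℝ)/2) * x ^ ((1:ℝ)/2) ≤ -genFun v x ∧
        -genFun v x ≤ (2 : ℝ) ^ ((1:ℝ)/2) * Estar ^ ((1:ℝ)/2) * x ^ ((1:ℝ)/2)) ∧
      ((2 : ℝ) ^ (-(1:ℝ)/2) * Einf * Estar ^ (-(1:ℝ)/2) * x ^ (-(1:ℝ)/2)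
          ≤ -deriv (genFun v) x ∧
        -deriv (genFun v) x
          ≤ (2 : ℝ) ^ (-(1:ℝ)/2) * Estar * Einf ^ (-(1:ℝ)/2) * x ^ (-(1:ℝ)/2)) ∧
      ((2 : ℝ) ^ (-(3:ℝ)/2) * Einf ^ 3 * Estar ^ (-(5:ℝ)/2) * x ^ (-(3:ℝ)/2)
          ≤ iteratedDeriv 2 (genFun v) x ∧
        iteratedDeriv 2 (genFun v) x
          ≤ (2 : ℝ) ^ (-(3:ℝ)/2) * Estar ^ 3 * Einf ^ (-(5:ℝ)/2) * x ^ (-(3:ℝ)/2)) ∧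
      (Einf ≤ genFun v x * deriv (genFun v) x ∧
        genFun v x * deriv (genFun v) x ≤ Estar) := by
  intro x hx Estar Einf hub hlb hEinf
  have hlow : ∀ y ∈ Set.Ioc 0 x, Einf ≤ EFun v y := fun y hy => hlb.1 ⟨y, hy, rfl⟩
  have hup : ∀ y ∈ Set.Ioc 0 x, EFun v y ≤ Estar := fun y hy => hub.1 ⟨y, hy, rfl⟩
  have hxm : x ∈ Set.Ioc 0 x := ⟨hx, le_rfl⟩
  have hEstar : 0 < Estar := lt_of_lt_of_le hEinf ((hlow x hxm).trans (hup x hxm))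
  obtain ⟨hW1, hW2⟩ := GFA.W_bound hnn hsum hx hEinf hlow hup hderiv
  obtain ⟨hV1, hV2⟩ := GFA.neg_genFun_bound hnn hsum hx hEinf hlow hup hderiv
  obtain ⟨hS1, hS2⟩ := GFA.S_pos hnn hsum hx hEinf (hlow x hxm)
  have hd : deriv (genFun v) x = -(GFA.S v 1 x) := GFA.deriv_genFun hnn hsum hx
  have hi2 : iteratedDeriv 2 (genFun v) x = GFA.S v 2 x := GFA.iteratedDeriv_two hnn hsum hx
  have hEx : EFun v x = (GFA.S v 1 x)^3 / GFA.S v 2 x := GFA.EFun_eq hnn hsum hx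
  have hExpos : 0 < EFun v x := lt_of_lt_of_le hEinf (hlow x hxm)
  have hS2eq : GFA.S v 2 x = (GFA.S v 1 x)^3 / EFun v x := by
    rw [hEx]; field_simp
  have hApos : 0 < Real.sqrt Einf := Real.sqrt_pos.2 hEinf
  have hBpos : 0 < Real.sqrt Estar := Real.sqrt_pos.2 hEstar
  have hXpos : 0 < Real.sqrt x := Real.sqrt_pos.2 hx
  have hTpos : 0 < Real.sqrt 2 := Real.sqrt_pos.2 (by norm_num)
  have hA2 : (Real.sqrt Einf)^2 = Einf := Real.sq_sqrt hEinf.le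
  have hB2 : (Real.sqrt Estar)^2 = Estar := Real.sq_sqrt hEstar.le
  have hAB : Real.sqrt Einf ≤ Real.sqrt Estar :=
    Real.sqrt_le_sqrt ((hlow x hxm).trans (hup x hxm))
  have e1 : ∀ {a : ℝ}, 0 < a → Real.sqrt (2*a*x) = Real.sqrt 2 * Real.sqrt a * Real.sqrt x := by
    intro a ha
    rw [Real.sqrt_mul (by positivity), Real.sqrt_mul (by norm_num : (0:ℝ) ≤ 2)]
  have e2 : ∀ {a : ℝ}, 0 < a →
      Real.sqrt (a/(2*x)) = Real.sqrt a / (Real.sqrt 2 * Real.sqrt x) := by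
    intro a ha
    rw [Real.sqrt_div ha.le, Real.sqrt_mul (by norm_num : (0:ℝ) ≤ 2)]
  rw [e1 hEinf] at hV1
  rw [e1 hEstar] at hV2
  rw [e2 hEinf] at hW1
  rw [e2 hEstar] at hW2
  have hVnn : 0 ≤ -genFun v x := le_trans (by positivity) hV1
  refine ⟨⟨?_, ?_⟩, ⟨?_, ?_⟩, ⟨?_, ?_⟩, ⟨?_, ?_⟩⟩
  · rw [GFA.rpow_half (by norm_num : (0:ℝ) < 2), GFA.rpow_half hEinf, GFA.rpow_half hx]
    exact hV1
  · rw [GFA.rpow_half (by norm_num : (0:ℝ) < 2), GFA.rpow_half hEstar, GFA.rpow_half hx]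
    exact hV2
  · rw [hd, GFA.rpow_neg_half (by norm_num : (0:ℝ) < 2), GFA.rpow_neg_half hEstar,
      GFA.rpow_neg_half hx, neg_neg]
    exact le_trans (GFA.alg2L hApos hBpos hXpos hTpos hAB hA2) hW1
  · rw [hd, GFA.rpow_neg_half (by norm_num : (0:ℝ) < 2), GFA.rpow_neg_half hEinf,
      GFA.rpow_neg_half hx, neg_neg]
    exact le_trans hW2 (GFA.alg2U hApos hBpos hXpos hTpos hAB hB2)
  · rw [hi2, hS2eq, GFA.rpow_neg_three_half (by norm_num : (0:ℝ) < 2),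
      GFA.rpow_neg_five_half hEstar, GFA.rpow_neg_three_half hx]
    calc ((Real.sqrt 2)^3)⁻¹ * Einf^3 * ((Real.sqrt Estar)^5)⁻¹ * ((Real.sqrt x)^3)⁻¹
        ≤ (Real.sqrt Einf/(Real.sqrt 2 * Real.sqrt x))^3 / Estar :=
          GFA.alg3L hApos hBpos hXpos hTpos hAB hA2 hB2
      _ ≤ (GFA.S v 1 x)^3 / EFun v x := by
          apply div_le_div₀ (by positivity) ?_ hExpos (hup x hxm)
          exact pow_le_pow_left₀ (by positivity) hW1 3
  · rw [hi2, hS2eq, GFA.rpow_neg_three_half (by norm_num : (0:ℝ) < 2),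
      GFA.rpow_neg_five_half hEinf, GFA.rpow_neg_three_half hx]
    calc (GFA.S v 1 x)^3 / EFun v x
        ≤ (Real.sqrt Estar/(Real.sqrt 2 * Real.sqrt x))^3 / Einf := by
          apply div_le_div₀ (by positivity) ?_ hEinf (hlow x hxm)
          exact pow_le_pow_left₀ hS1.le hW2 3
      _ ≤ ((Real.sqrt 2)^3)⁻¹ * Estar^3 * ((Real.sqrt Einf)^5)⁻¹ * ((Real.sqrt x)^3)⁻¹ :=
          GFA.alg3U hApos hBpos hXpos hTpos hAB hA2 hB2
  · have hrw : genFun v x * deriv (genFun v) x = (-genFun v x) * GFA.S v 1 x := by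
      rw [hd]; ring
    rw [hrw]
    calc Einf = (Real.sqrt 2 * Real.sqrt Einf * Real.sqrt x)
          * (Real.sqrt Einf/(Real.sqrt 2 * Real.sqrt x)) :=
          GFA.alg4 hApos hXpos hTpos hA2
      _ ≤ (-genFun v x) * GFA.S v 1 x :=
          mul_le_mul hV1 hW1 (by positivity) hVnn
  · have hrw : genFun v x * deriv (genFun v) x = (-genFun v x) * GFA.S v 1 x := by
      rw [hd]; ring
    rw [hrw]
    calc (-genFun v x) * GFA.S v 1 x
        ≤ (Real.sqrt 2 * Real.sqrt Estar * Real.sqrt x)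
          * (Real.sqrt Estar/(Real.sqrt 2 * Real.sqrt x)) :=
          mul_le_mul hV2 hW2 hS1.le (by positivity)
      _ = Estar := (GFA.alg4 hBpos hXpos hTpos hB2).symm
end

section
/- Let v = (v_k)_{k≥1} be nonnegative reals with 0 < Σ_{k=1}^∞ v_k ≤ 1, and let V(x) := Σ_{k=1}^∞ v_k e^{−kx} − 1. Then for every x > 0: 0 ≤ 3·V'(x)²/V''(x) + V'(x)³/V''(x)² ≤ 3·V'(x)²/V''(x) ≤ 3. -/
open Set Filter

/-- Auxiliary term: `v_{k+1} (k+1)^p e^{-(k+1)y}`. -/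
noncomputable def genTerm (v : ℕ → ℝ) (p : ℕ) (k : ℕ) (y : ℝ) : ℝ :=
  v (k + 1) * ((k : ℝ) + 1) ^ p * Real.exp (-((k : ℝ) + 1) * y)

lemma genTerm_nonneg (v : ℕ → ℝ) (hnn : ∀ k : ℕ, 1 ≤ k → 0 ≤ v k) (p k : ℕ) (y : ℝ) :
    0 ≤ genTerm v p k y := by
  unfold genTerm
  have := hnn (k + 1) (by omega)
  positivity

lemma genTerm_hasDerivAt (v : ℕ → ℝ) (p k : ℕ) (y : ℝ) :
    HasDerivAt (genTerm v p k) (-(genTerm v (p + 1) k y)) y := by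
  have h1 : HasDerivAt (fun z : ℝ => -((k : ℝ) + 1) * z) (-((k : ℝ) + 1)) y := by
    simpa using (hasDerivAt_id y).const_mul (-((k : ℝ) + 1))
  have h2 := (h1.exp).const_mul (v (k + 1) * ((k : ℝ) + 1) ^ p)
  unfold genTerm
  refine h2.congr_deriv ?_
  ring

lemma genTerm_summable (v : ℕ → ℝ) (hnn : ∀ k : ℕ, 1 ≤ k → 0 ≤ v k)
    (hsummable : Summable (fun k : ℕ => v (k + 1))) {y : ℝ} (hy : 0 < y) (p : ℕ) :
    Summable (fun k => genTerm v p k y) := by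
  have hr : |Real.exp (-y)| < 1 := by
    rw [abs_of_pos (Real.exp_pos _)]
    exact Real.exp_lt_one_iff.mpr (by linarith)
  have hgeom : Summable (fun k : ℕ => ((k : ℝ) + 1) ^ p * Real.exp (-((k : ℝ) + 1) * y)) := by
    have h0 : Summable (fun n : ℕ => (n : ℝ) ^ p * (Real.exp (-y)) ^ n) :=
      summable_pow_mul_geometric_of_norm_lt_one p (by simpa [Real.norm_eq_abs] using hr)
    have h1 := (summable_nat_add_iff 1).mpr h0
    refine h1.congr fun k => ?_
    rw [← Real.exp_nat_mul]
    push_cast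
    ring_nf
  obtain ⟨M, hM⟩ : ∃ M, ∀ k : ℕ, ((k : ℝ) + 1) ^ p * Real.exp (-((k : ℝ) + 1) * y) ≤ M := by
    obtain ⟨M, hM⟩ := hgeom.tendsto_atTop_zero.bddAbove_range
    exact ⟨M, fun k => hM (Set.mem_range_self k)⟩
  refine Summable.of_nonneg_of_le (fun k => genTerm_nonneg v hnn p k y)
    (fun k => ?_) (hsummable.mul_right M)
  unfold genTerm
  rw [mul_assoc]
  exact mul_le_mul_of_nonneg_left (hM k) (hnn (k + 1) (by omega))

lemma hasDerivAt_tsum_genTerm (v : ℕ → ℝ) (hnn : ∀ k : ℕ, 1 ≤ k → 0 ≤ v k)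
    (hsummable : Summable (fun k : ℕ => v (k + 1))) {x : ℝ} (hx : 0 < x) (p : ℕ) :
    HasDerivAt (fun y => ∑' k, genTerm v p k y) (-(∑' k, genTerm v (p + 1) k x)) x := by
  have hmem : x ∈ Ioi (x / 2) := by simp [Set.mem_Ioi]; linarith
  have key := hasDerivAt_tsum_of_isPreconnected
    (u := fun k => genTerm v (p + 1) k (x / 2))
    (genTerm_summable v hnn hsummable (by linarith) (p + 1))
    (isOpen_Ioi (a := x / 2)) isPreconnected_Ioi
    (g := fun k y => genTerm v p k y) (g' := fun k y => -(genTerm v (p + 1) k y))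
    (fun k y _ => genTerm_hasDerivAt v p k y)
    (fun k y hy => ?_) hmem (genTerm_summable v hnn hsummable hx p) hmem
  · simpa [tsum_neg] using key
  · rw [norm_neg, Real.norm_eq_abs, abs_of_nonneg (genTerm_nonneg v hnn _ k y)]
    unfold genTerm
    have hyx : x / 2 ≤ y := le_of_lt hy
    have hexp : Real.exp (-((k : ℝ) + 1) * y) ≤ Real.exp (-((k : ℝ) + 1) * (x / 2)) := by
      apply Real.exp_le_exp.mpr
      have hk : (0 : ℝ) ≤ (k : ℝ) + 1 := by positivity
      nlinarith
    have h0 : 0 ≤ v (k + 1) * ((k : ℝ) + 1) ^ (p + 1) := by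
      have := hnn (k + 1) (by omega); positivity
    exact mul_le_mul_of_nonneg_left hexp h0

lemma genFun_eq (v : ℕ → ℝ) : genFun v = fun y => (∑' k, genTerm v 0 k y) - 1 := by
  funext y
  unfold genFun genTerm
  simp

lemma genFun_hasDerivAt (v : ℕ → ℝ) (hnn : ∀ k : ℕ, 1 ≤ k → 0 ≤ v k)
    (hsummable : Summable (fun k : ℕ => v (k + 1))) {x : ℝ} (hx : 0 < x) :
    HasDerivAt (genFun v) (-(∑' k, genTerm v 1 k x)) x := by
  rw [genFun_eq]
  exact (hasDerivAt_tsum_genTerm v hnn hsummable hx 0).sub_const 1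

/-- for a nonzero sub-probability distribution,
`0 ≤ 3V'(x)²/V''(x) + V'(x)³/V''(x)² ≤ 3V'(x)²/V''(x) ≤ 3` for all `x > 0`. -/
theorem genFun_E_increment_bounds (v : ℕ → ℝ)
    (hnn : ∀ k : ℕ, 1 ≤ k → 0 ≤ v k)
    (hsummable : Summable (fun k : ℕ => v (k + 1)))
    (hpos : 0 < ∑' k : ℕ, v (k + 1))
    (hle : (∑' k : ℕ, v (k + 1)) ≤ 1) :
    ∀ x : ℝ, 0 < x →
      0 ≤ 3 * (deriv (genFun v) x) ^ 2 / iteratedDeriv 2 (genFun v) x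
          + (deriv (genFun v) x) ^ 3 / (iteratedDeriv 2 (genFun v) x) ^ 2 ∧
      3 * (deriv (genFun v) x) ^ 2 / iteratedDeriv 2 (genFun v) x
          + (deriv (genFun v) x) ^ 3 / (iteratedDeriv 2 (genFun v) x) ^ 2
        ≤ 3 * (deriv (genFun v) x) ^ 2 / iteratedDeriv 2 (genFun v) x ∧
      3 * (deriv (genFun v) x) ^ 2 / iteratedDeriv 2 (genFun v) x ≤ 3 := by
  intro x hx
  set A := ∑' k, genTerm v 1 k x with hA_def
  set B := ∑' k, genTerm v 2 k x with hB_def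
  have hD : deriv (genFun v) x = -A := (genFun_hasDerivAt v hnn hsummable hx).deriv
  have hD2 : iteratedDeriv 2 (genFun v) x = B := by
    rw [show (2 : ℕ) = 1 + 1 from rfl, iteratedDeriv_succ, iteratedDeriv_one]
    have hEq : deriv (genFun v) =ᶠ[nhds x] (fun y => -(∑' k, genTerm v 1 k y)) := by
      filter_upwards [isOpen_Ioi.mem_nhds (show x ∈ Ioi (0:ℝ) from hx)] with y hy
      exact (genFun_hasDerivAt v hnn hsummable hy).deriv
    rw [hEq.deriv_eq]
    have h := ((hasDerivAt_tsum_genTerm v hnn hsummable hx 1).neg).deriv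
    rw [show (fun y => -∑' k, genTerm v 1 k y) = -(fun y => ∑' k, genTerm v 1 k y) from rfl, h]
    ring
  have hexk : ∃ k, 0 < v (k + 1) := by
    by_contra h
    push_neg at h
    have hz : ∀ k : ℕ, v (k + 1) = 0 := fun k => le_antisymm (h k) (hnn (k + 1) (by omega))
    simp [hz] at hpos
  obtain ⟨k0, hk0⟩ := hexk
  have hsum2 := genTerm_summable v hnn hsummable hx 2
  have hsum1 := genTerm_summable v hnn hsummable hx 1
  have hsum0 := genTerm_summable v hnn hsummable hx 0
  have hB : 0 < B := by
    refine Summable.tsum_pos hsum2 (fun k => genTerm_nonneg v hnn 2 k x) k0 ?_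
    unfold genTerm
    positivity
  have hA : 0 ≤ A := tsum_nonneg (fun k => genTerm_nonneg v hnn 1 k x)
  have hA3B : A ≤ 3 * B := by
    rw [hA_def, hB_def, ← tsum_mul_left]
    refine Summable.tsum_le_tsum (fun k => ?_) hsum1 (hsum2.mul_left 3)
    unfold genTerm
    have h1 := hnn (k + 1) (by omega)
    have h2 : ((k : ℝ) + 1) ≤ 3 * ((k : ℝ) + 1) ^ 2 := by nlinarith [Nat.cast_nonneg (α := ℝ) k]
    have h3 := Real.exp_pos (-((k : ℝ) + 1) * x)
    calc v (k + 1) * ((k : ℝ) + 1) ^ 1 * Real.exp (-((k : ℝ) + 1) * x)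
        ≤ v (k + 1) * (3 * ((k : ℝ) + 1) ^ 2) * Real.exp (-((k : ℝ) + 1) * x) := by
          rw [pow_one]
          have h4 : 0 ≤ v (k + 1) * (3 * ((k : ℝ) + 1) ^ 2 - ((k : ℝ) + 1)) *
              Real.exp (-((k : ℝ) + 1) * x) :=
            mul_nonneg (mul_nonneg h1 (by linarith)) h3.le
          nlinarith [h4]
      _ = 3 * (v (k + 1) * ((k : ℝ) + 1) ^ 2 * Real.exp (-((k : ℝ) + 1) * x)) := by ring
  have hS0 : (∑' k, genTerm v 0 k x) ≤ 1 := by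
    refine le_trans (Summable.tsum_le_tsum (fun k => ?_) hsum0 hsummable) hle
    unfold genTerm
    have h1 := hnn (k + 1) (by omega)
    have h2 : Real.exp (-((k : ℝ) + 1) * x) ≤ 1 := by
      apply Real.exp_le_one_iff.mpr
      have hk : (0:ℝ) ≤ (k : ℝ) + 1 := by positivity
      nlinarith
    nlinarith
  have hS0nn : 0 ≤ (∑' k, genTerm v 0 k x) := tsum_nonneg (fun k => genTerm_nonneg v hnn 0 k x)
  have hA2B : A ^ 2 ≤ B := by
    have hCS : A ≤ Real.sqrt ((∑' k, genTerm v 0 k x) * B) := by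
      refine Summable.tsum_le_of_sum_le hsum1 (fun s => ?_)
      have key : (∑ k ∈ s, genTerm v 1 k x) ^ 2 ≤ (∑' k, genTerm v 0 k x) * B := by
        have cs := Finset.sum_mul_sq_le_sq_mul_sq s
          (fun k => Real.sqrt (genTerm v 0 k x)) (fun k => Real.sqrt (genTerm v 2 k x))
        have e1 : ∀ k, Real.sqrt (genTerm v 0 k x) * Real.sqrt (genTerm v 2 k x)
            = genTerm v 1 k x := by
          intro k
          rw [← Real.sqrt_mul (genTerm_nonneg v hnn 0 k x)]
          have e : genTerm v 0 k x * genTerm v 2 k x = (genTerm v 1 k x) ^ 2 := by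
            unfold genTerm; ring
          rw [e, Real.sqrt_sq (genTerm_nonneg v hnn 1 k x)]
        have e2 : ∀ p k, Real.sqrt (genTerm v p k x) ^ 2 = genTerm v p k x := fun p k =>
          Real.sq_sqrt (genTerm_nonneg v hnn p k x)
        simp only [e1, e2] at cs
        refine le_trans cs (mul_le_mul ?_ ?_ ?_ hS0nn)
        · exact Summable.sum_le_tsum s (fun k _ => genTerm_nonneg v hnn 0 k x) hsum0
        · exact Summable.sum_le_tsum s (fun k _ => genTerm_nonneg v hnn 2 k x) hsum2
        · exact Finset.sum_nonneg (fun k _ => genTerm_nonneg v hnn 2 k x)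
      have hsnn : 0 ≤ ∑ k ∈ s, genTerm v 1 k x :=
        Finset.sum_nonneg (fun k _ => genTerm_nonneg v hnn 1 k x)
      calc ∑ k ∈ s, genTerm v 1 k x
          = Real.sqrt ((∑ k ∈ s, genTerm v 1 k x) ^ 2) := (Real.sqrt_sq hsnn).symm
        _ ≤ Real.sqrt ((∑' k, genTerm v 0 k x) * B) := Real.sqrt_le_sqrt key
    have hp := pow_le_pow_left₀ hA hCS 2
    rw [Real.sq_sqrt (by positivity)] at hp
    calc A ^ 2 ≤ (∑' k, genTerm v 0 k x) * B := hp
      _ ≤ 1 * B := mul_le_mul_of_nonneg_right hS0 (le_of_lt hB)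
      _ = B := one_mul B
  rw [hD, hD2]
  have hBne : B ≠ 0 := ne_of_gt hB
  have key : 3 * (-A) ^ 2 / B + (-A) ^ 3 / B ^ 2 = A ^ 2 * (3 * B - A) / B ^ 2 := by
    field_simp
    ring
  refine ⟨?_, ?_, ?_⟩
  · rw [key]
    apply div_nonneg (mul_nonneg (sq_nonneg A) (by linarith)) (by positivity)
  · have h1 : (-A) ^ 3 / B ^ 2 ≤ 0 := by
      apply div_nonpos_of_nonpos_of_nonneg
      · have e : (-A) ^ 3 = -(A ^ 3) := by ring
        rw [e]
        simp [pow_nonneg hA]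
      · positivity
    linarith
  · rw [neg_sq, div_le_iff₀ hB]
    nlinarith
end

section
/- Let v = (v_k)_{k≥1} be nonnegative reals with Σ_{k=1}^∞ v_k = 1, let V(x) := Σ_{k=1}^∞ v_k e^{−kx} − 1, let K ≥ 1 be an integer and 0 < ε ≤ 1/2. If V(1/K) ≤ −ε, then 1 − Σ_{k=1}^{⌊εK/2⌋} v_k ≥ ε/4. -/
/-- if `V(1/K) ≤ −ε`, then the mass carried by indices
`k > ⌊εK/2⌋` is at least `ε/4`. -/
theorem genFun_to_tail_mass (v : ℕ → ℝ)
    (hnn : ∀ k : ℕ, 1 ≤ k → 0 ≤ v k)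
    (hsum : HasSum (fun k : ℕ => v (k + 1)) 1)
    (K : ℕ) (hK : 1 ≤ K) (ε : ℝ) (hε0 : 0 < ε) (hε : ε ≤ 1 / 2)
    (hgf : genFun v (1 / (K : ℝ)) ≤ -ε) :
    ε / 4 ≤ 1 - ∑ k ∈ Finset.Icc 1 ⌊ε * (K : ℝ) / 2⌋₊, v k := by
  have hKpos : (0:ℝ) < K := by exact_mod_cast hK
  set m := ⌊ε * (K : ℝ) / 2⌋₊ with hm
  set x : ℝ := 1 / (K : ℝ) with hxdef
  have hxpos : 0 < x := by positivity
  have hnn' : ∀ k : ℕ, 0 ≤ v (k + 1) := fun k => hnn (k + 1) (Nat.le_add_left 1 k)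
  set f : ℕ → ℝ := fun k => v (k + 1) * Real.exp (-((k : ℝ) + 1) * x) with hfdef
  set g : ℕ → ℝ := fun k => v (k + 1) * (1 - Real.exp (-((k : ℝ) + 1) * x)) with hgdef
  have hexp_le_one : ∀ k : ℕ, Real.exp (-((k : ℝ) + 1) * x) ≤ 1 := by
    intro k
    rw [Real.exp_le_one_iff]
    have hk : (0:ℝ) ≤ (k:ℝ) := Nat.cast_nonneg k
    nlinarith
  have hg_nn : ∀ k, 0 ≤ g k := fun k =>
    mul_nonneg (hnn' k) (by linarith [hexp_le_one k])
  have hg_le : ∀ k, g k ≤ v (k + 1) := by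
    intro k
    have h1 : 0 ≤ v (k+1) * Real.exp (-((k : ℝ) + 1) * x) :=
      mul_nonneg (hnn' k) (Real.exp_pos _).le
    simp only [hgdef]
    nlinarith
  have hgsummable : Summable g := Summable.of_nonneg_of_le hg_nn hg_le hsum.summable
  have hfsummable : Summable f := by
    apply Summable.of_nonneg_of_le (fun k => mul_nonneg (hnn' k) (Real.exp_pos _).le)
      (fun k => ?_) hsum.summable
    have := hexp_le_one k
    nlinarith [hnn' k]
  have hF : HasSum f (∑' k, f k) := hfsummable.hasSum
  have hgsum : HasSum g (1 - ∑' k, f k) := by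
    have := hsum.sub hF
    convert this using 1
    · rfl
    funext k
    simp [hgdef, hfdef]
    ring
  have hFle : ∑' k, f k ≤ 1 - ε := by
    have : (∑' k, f k) - 1 ≤ -ε := hgf
    linarith
  have hgtsum : ε ≤ ∑' k, g k := by
    rw [hgsum.tsum_eq]
    linarith
  -- head indicator q and tail indicator h
  set q : ℕ → ℝ := fun k => if k < m then v (k + 1) else 0 with hqdef
  set h : ℕ → ℝ := fun k => if m ≤ k then v (k + 1) else 0 with hhdef
  set S : ℝ := ∑ i ∈ Finset.range m, v (i + 1) with hSdef
  have hq : HasSum q S := by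
    have h0 : ∀ k ∉ Finset.range m, q k = 0 := by
      intro k hk
      simp only [hqdef, if_neg (Finset.mem_range.not.mp hk)]
    have := hasSum_sum_of_ne_finset_zero (s := Finset.range m) (f := q) (L := SummationFilter.unconditional ℕ) h0
    convert this using 1
    rw [hSdef]
    apply Finset.sum_congr rfl
    intro i hi
    simp [hqdef, Finset.mem_range.mp hi]
  have hh : HasSum h (1 - S) := by
    have := hsum.sub hq
    convert this using 1
    · rfl
    funext k
    by_cases hk : m ≤ k
    · simp [hhdef, hqdef, hk, Nat.not_lt.mpr hk]
    · simp [hhdef, hqdef, hk, Nat.lt_of_not_le hk]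
  set p : ℕ → ℝ := fun k => ε / 2 * v (k + 1) + h k with hpdef
  have hp : HasSum p (ε / 2 * 1 + (1 - S)) := (hsum.mul_left (ε / 2)).add hh
  have hmle : (m : ℝ) ≤ ε * K / 2 := Nat.floor_le (by positivity)
  have hgle_p : ∀ k, g k ≤ p k := by
    intro k
    by_cases hk : k < m
    · have hk1 : ((k : ℝ) + 1) ≤ (m : ℝ) := by exact_mod_cast Nat.succ_le_of_lt hk
      have hyle : ((k : ℝ) + 1) * x ≤ ε / 2 := by
        have : (m : ℝ) * x ≤ ε / 2 := by
          rw [hxdef]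
          have hKne : (K:ℝ) ≠ 0 := ne_of_gt hKpos
          calc (m:ℝ) * (1 / K) ≤ (ε * K / 2) * (1 / K) :=
                mul_le_mul_of_nonneg_right hmle (by positivity)
            _ = ε / 2 := by field_simp
        nlinarith
      have hexp_ge : 1 - Real.exp (-((k : ℝ) + 1) * x) ≤ ((k : ℝ) + 1) * x := by
        have := Real.add_one_le_exp (-((k : ℝ) + 1) * x)
        linarith
      have hh0 : h k = 0 := by simp [hhdef, Nat.not_le.mpr hk]
      rw [hpdef]
      simp only [hh0, add_zero]
      calc g k ≤ v (k + 1) * (((k : ℝ) + 1) * x) :=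
            mul_le_mul_of_nonneg_left hexp_ge (hnn' k)
        _ ≤ v (k + 1) * (ε / 2) := mul_le_mul_of_nonneg_left hyle (hnn' k)
        _ = ε / 2 * v (k + 1) := by ring
    · have hhk : h k = v (k + 1) := by simp [hhdef, Nat.le_of_not_lt hk]
      have := hg_le k
      have hev : 0 ≤ ε / 2 * v (k + 1) := mul_nonneg (by linarith) (hnn' k)
      rw [hpdef]
      simp only [hhk]
      linarith
  have hkey : ∑' k, g k ≤ ε / 2 * 1 + (1 - S) :=
    hp.tsum_eq ▸ Summable.tsum_le_tsum hgle_p hgsummable hp.summable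
  have hIcc : ∑ k ∈ Finset.Icc 1 m, v k = S := by
    rw [hSdef, show Finset.Icc 1 m = Finset.Ico 1 (m+1) by rw [Finset.Ico_add_one_right_eq_Icc],
      Finset.sum_Ico_eq_sum_range]
    simp [add_comm]
  rw [hIcc]
  linarith
end
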